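/- arXiv:1412.2817 — 5 statements merged into one kernel-verified Lean document; each statement's English description precedes it below -/
import Mathlib

section
/- Assume R_u is invertible and R_ū := E[ū ūᵀ] = R_u + R_r is invertible, where R_r := −P₁ ⊙ R_u + p σ_ξ² I_M and P₁ = (2p−p²)𝟙𝟙ᵀ − (p−p²)I_M. Then I_M + R_u⁻¹ R_r is invertible, and the estimate computed from censored moments is biased according to w̄ᵒ := R_ū⁻¹ E[d·ū] = (1−p)(I_M − Q) wᵒ, where Q := R_u⁻¹ R_r (I_M + R_u⁻¹ R_r)⁻¹. -/
open MeasureTheory ProbabilityTheory Matrix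
open scoped Matrix

/-- Index type for the mutually independent sources: the `M` indicator variables `fʲ`,
the regressor `u`, and the perturbation `ξ`. -/
inductive MissIdx (M : ℕ) where
  | F : Fin M → MissIdx M
  | U : MissIdx M
  | Xi : MissIdx M

/-- Codomain of each of the independent sources. -/
def MissIdx.type (M : ℕ) : MissIdx M → Type
  | .F _ => ℝ
  | .U => Fin M → ℝ
  | .Xi => Fin M → ℝ

instance (M : ℕ) (i : MissIdx M) : MeasurableSpace (MissIdx.type M i) :=
  match i with
  | .F _ => (inferInstance : MeasurableSpace ℝ)
  | .U => (inferInstance : MeasurableSpace (Fin M → ℝ))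
  | .Xi => (inferInstance : MeasurableSpace (Fin M → ℝ))

/-- The family of random variables indexed by `MissIdx`. -/
def missFun {Ω : Type*} (M : ℕ) (f : Fin M → Ω → ℝ) (u ξ : Ω → Fin M → ℝ) :
    (i : MissIdx M) → Ω → MissIdx.type M i
  | .F j => f j
  | .U => u
  | .Xi => ξ

/-- The censored regressor `ū = (I_M − F)u + Fξ`. -/
noncomputable def censReg {Ω : Type*} (M : ℕ) (f : Fin M → Ω → ℝ) (u ξ : Ω → Fin M → ℝ)
    (ω : Ω) : Fin M → ℝ :=
  ((1 : Matrix (Fin M) (Fin M) ℝ) - Matrix.diagonal (fun k => f k ω)) *ᵥ u ω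
    + (Matrix.diagonal (fun k => f k ω)) *ᵥ ξ ω

/-- The all-ones matrix `𝟙𝟙ᵀ`. -/
noncomputable def onesMat (M : ℕ) : Matrix (Fin M) (Fin M) ℝ := Matrix.of fun _ _ => (1 : ℝ)

/-- The matrix `P₁ = (2p−p²)𝟙𝟙ᵀ − (p−p²)I_M`. -/
noncomputable def Pone (M : ℕ) (p : ℝ) : Matrix (Fin M) (Fin M) ℝ :=
  (2 * p - p ^ 2) • onesMat M - (p - p ^ 2) • (1 : Matrix (Fin M) (Fin M) ℝ)

/-- The matrix `R_r := −P₁ ⊙ R_u + p σ_ξ² I_M`. -/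
noncomputable def Rr (M : ℕ) (p σξ : ℝ) (Ru : Matrix (Fin M) (Fin M) ℝ) :
    Matrix (Fin M) (Fin M) ℝ :=
  -Matrix.hadamard (Pone M p) Ru + (p * σξ ^ 2) • (1 : Matrix (Fin M) (Fin M) ℝ)

open scoped ENNReal in
lemma L2mulInt {Ω : Type*} [MeasurableSpace Ω] {μ : Measure Ω} {g h : Ω → ℝ}
    (hg : MemLp g 2 μ) (hh : MemLp h 2 μ) : Integrable (fun ω => g ω * h ω) μ := by
  rw [← memLp_one_iff_integrable]
  have h2 : (1 : ℝ≥0∞)/1 = 1/2 + 1/2 := by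
    rw [ENNReal.div_add_div_same, div_one, one_add_one_eq_two,
      ENNReal.div_self two_ne_zero ENNReal.ofNat_ne_top]
  exact hh.smul (φ := g) (r := 1) hg

/-- if `R_u` and `R_ū = R_u + R_r` are invertible, then `I_M + R_u⁻¹ R_r` is
invertible and the estimate computed from censored moments is biased:
`w̄ᵒ := R_ū⁻¹ E[d·ū] = (1−p)(I_M − Q) wᵒ` with `Q = R_u⁻¹ R_r (I_M + R_u⁻¹ R_r)⁻¹`. -/
theorem censored_estimate_bias
    {Ω : Type*} [MeasurableSpace Ω] (μ : Measure Ω) [IsProbabilityMeasure μ]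
    (M : ℕ) (p : ℝ) (hp0 : 0 ≤ p) (hp1 : p < 1) (σξ : ℝ) (hσξ : 0 ≤ σξ)
    (u ξ : Ω → Fin M → ℝ) (f : Fin M → Ω → ℝ)
    (humeas : Measurable u) (hξmeas : Measurable ξ) (hfmeas : ∀ j, Measurable (f j))
    (huL2 : ∀ i, MemLp (fun ω => u ω i) 2 μ) (hξL2 : ∀ i, MemLp (fun ω => ξ ω i) 2 μ)
    (humean : ∀ i, ∫ ω, u ω i ∂μ = 0) (hξmean : ∀ i, ∫ ω, ξ ω i ∂μ = 0)
    (Ru : Matrix (Fin M) (Fin M) ℝ)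
    (hRu : ∀ i j, Ru i j = ∫ ω, u ω i * u ω j ∂μ)
    (hξcov : ∀ i j, ∫ ω, ξ ω i * ξ ω j ∂μ = if i = j then σξ ^ 2 else 0)
    (hf01 : ∀ j ω, f j ω = 0 ∨ f j ω = 1)
    (hfp : ∀ j, μ {ω | f j ω = 1} = ENNReal.ofReal p)
    (hindep : iIndepFun (missFun M f u ξ) μ)
    (wo : Fin M → ℝ) (v : Ω → ℝ) (σv : ℝ)
    (hvmeas : Measurable v) (hvL2 : MemLp v 2 μ)
    (hvmean : ∫ ω, v ω ∂μ = 0) (hvvar : ∫ ω, (v ω) ^ 2 ∂μ = σv ^ 2)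
    (hvindep : IndepFun (fun ω => (u ω, (fun j => f j ω), ξ ω)) v μ)
    (d : Ω → ℝ) (hd : ∀ ω, d ω = u ω ⬝ᵥ wo + v ω)
    -- invertibility assumptions
    (hRuUnit : IsUnit Ru)
    (hRubar : (Matrix.of fun i j => ∫ ω, censReg M f u ξ ω i * censReg M f u ξ ω j ∂μ)
        = Ru + Rr M p σξ Ru)
    (hRubarUnit : IsUnit (Ru + Rr M p σξ Ru)) :
    IsUnit ((1 : Matrix (Fin M) (Fin M) ℝ) + Ru⁻¹ * Rr M p σξ Ru)
    ∧ (Ru + Rr M p σξ Ru)⁻¹ *ᵥ (fun i => ∫ ω, d ω * censReg M f u ξ ω i ∂μ)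
        = (1 - p) • ((1 - Ru⁻¹ * Rr M p σξ Ru *
            ((1 : Matrix (Fin M) (Fin M) ℝ) + Ru⁻¹ * Rr M p σξ Ru)⁻¹) *ᵥ wo) := by
  
  classical
  set g := censReg M f u ξ with hgdef
  -- pointwise formula for the censored regressor
  have hcr : ∀ ω i, g ω i = (1 - f i ω) * u ω i + f i ω * ξ ω i := by
    intro ω i
    simp only [hgdef, censReg, Matrix.sub_mulVec, Matrix.one_mulVec, Pi.add_apply,
      Pi.sub_apply, Matrix.mulVec_diagonal]
    ring
  -- measurability of the family
  have hmiss : ∀ i, Measurable (missFun M f u ξ i) := by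
    intro i
    cases i with
    | F j => exact hfmeas j
    | U => exact humeas
    | Xi => exact hξmeas
  -- basic integrability
  have huI : ∀ i, Integrable (fun ω => u ω i) μ := fun i => (huL2 i).integrable one_le_two
  have hξI : ∀ i, Integrable (fun ω => ξ ω i) μ := fun i => (hξL2 i).integrable one_le_two
  have hvI : Integrable v μ := hvL2.integrable one_le_two
  have huuI : ∀ i j, Integrable (fun ω => u ω i * u ω j) μ :=
    fun i j => L2mulInt (huL2 i) (huL2 j)
  have huξI : ∀ i j, Integrable (fun ω => u ω i * ξ ω j) μ :=
    fun i j => L2mulInt (huL2 i) (hξL2 j)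
  have huvI : ∀ i, Integrable (fun ω => u ω i * v ω) μ := fun i => L2mulInt (huL2 i) hvL2
  have hξvI : ∀ i, Integrable (fun ω => ξ ω i * v ω) μ := fun i => L2mulInt (hξL2 i) hvL2
  -- the indicators
  have hfbd : ∀ j ω, ‖f j ω‖ ≤ 1 := by
    intro j ω; rcases hf01 j ω with h | h <;> simp [h]
  have hfbd' : ∀ j ω, ‖1 - f j ω‖ ≤ 1 := by
    intro j ω; rcases hf01 j ω with h | h <;> simp [h]
  have hfaesm : ∀ j, AEStronglyMeasurable (f j) μ := fun j => (hfmeas j).aestronglyMeasurable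
  have hfaesm' : ∀ j, AEStronglyMeasurable (fun ω => 1 - f j ω) μ :=
    fun j => aestronglyMeasurable_const.sub (hfaesm j)
  have hSmeas : ∀ j, MeasurableSet {ω | f j ω = 1} :=
    fun j => (hfmeas j) (measurableSet_singleton 1)
  have hfind : ∀ j, f j = Set.indicator {ω | f j ω = 1} (fun _ => (1:ℝ)) := by
    intro j; funext ω
    rcases hf01 j ω with h | h
    · rw [Set.indicator_of_notMem (by simp [Set.mem_setOf_eq, h] : ω ∉ {ω | f j ω = 1})]
      exact h
    · rw [Set.indicator_of_mem (show ω ∈ {ω | f j ω = 1} from h)]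
      exact h
  have hfI : ∀ j, Integrable (f j) μ := by
    intro j; rw [hfind j]; exact (integrable_const (1:ℝ)).indicator (hSmeas j)
  have hfint : ∀ j, ∫ ω, f j ω ∂μ = p := by
    intro j
    have h1 : ∫ ω, f j ω ∂μ = ∫ ω, Set.indicator {ω | f j ω = 1} (fun _ => (1:ℝ)) ω ∂μ := by
      exact congrArg (fun h => ∫ ω, h ω ∂μ) (hfind j)
    rw [h1, MeasureTheory.integral_indicator_const (1:ℝ) (hSmeas j), measureReal_def, hfp j, smul_eq_mul,
      mul_one, ENNReal.toReal_ofReal hp0]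
  -- pairwise independence facts
  have hneqUF : ∀ j, (MissIdx.U : MissIdx M) ≠ .F j := fun j h => by cases h
  have hneqXiF : ∀ j, (MissIdx.Xi : MissIdx M) ≠ .F j := fun j h => by cases h
  have hneqUXi : (MissIdx.U : MissIdx M) ≠ .Xi := fun h => by cases h
  have hindepUF : ∀ j, IndepFun u (f j) μ := fun j => hindep.indepFun (hneqUF j)
  have hindepUXi : IndepFun u ξ μ := hindep.indepFun hneqUXi
  have hindepPair : ∀ j, IndepFun (fun ω => (u ω, ξ ω)) (f j) μ := fun j =>
    hindep.indepFun_prodMk hmiss .U .Xi (.F j) (hneqUF j) (hneqXiF j)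
  -- key expectations
  have key1 : ∀ i j : Fin M, ∫ ω, (u ω j * u ω i) * f i ω ∂μ = Ru j i * p := by
    intro i j
    have hI : IndepFun (fun ω => u ω j * u ω i) (f i) μ :=
      (hindepUF i).comp (show Measurable fun x : Fin M → ℝ => x j * x i from
        (measurable_pi_apply j).mul (measurable_pi_apply i)) measurable_id
    have := hI.integral_mul_eq_mul_integral (huuI j i).aestronglyMeasurable (hfI i).aestronglyMeasurable
    simpa [Pi.mul_apply, hfint i, hRu j i] using this
  have key2 : ∀ i j : Fin M, ∫ ω, u ω j * ξ ω i ∂μ = 0 := by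
    intro i j
    have hI : IndepFun (fun ω => u ω j) (fun ω => ξ ω i) μ :=
      hindepUXi.comp (measurable_pi_apply j) (measurable_pi_apply i)
    have := hI.integral_mul_eq_mul_integral (huI j).aestronglyMeasurable (hξI i).aestronglyMeasurable
    simpa [Pi.mul_apply, humean j, hξmean i] using this
  have key3 : ∀ i j : Fin M, ∫ ω, (u ω j * ξ ω i) * f i ω ∂μ = 0 := by
    intro i j
    have hI : IndepFun (fun ω => u ω j * ξ ω i) (f i) μ :=
      (hindepPair i).comp (show Measurable fun x : (Fin M → ℝ) × (Fin M → ℝ) =>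
        x.1 j * x.2 i from ((measurable_pi_apply j).comp measurable_fst).mul
          ((measurable_pi_apply i).comp measurable_snd)) measurable_id
    have := hI.integral_mul_eq_mul_integral (huξI j i).aestronglyMeasurable (hfI i).aestronglyMeasurable
    simpa [Pi.mul_apply, key2 i j] using this
  -- the v-term vanishes
  have hgI : ∀ i, Integrable (fun ω => g ω i) μ := by
    intro i
    have : (fun ω => g ω i)
        = fun ω => (1 - f i ω) * u ω i + f i ω * ξ ω i := funext fun ω => hcr ω i
    rw [this]
    exact ((huI i).bdd_mul (hfaesm' i) (ae_of_all _ (hfbd' i))).add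
      ((hξI i).bdd_mul (hfaesm i) (ae_of_all _ (hfbd i)))
  have hgvI : ∀ i, Integrable (fun ω => g ω i * v ω) μ := by
    intro i
    have : (fun ω => g ω i * v ω)
        = fun ω => (1 - f i ω) * (u ω i * v ω) + f i ω * (ξ ω i * v ω) :=
      funext fun ω => by rw [hcr ω i]; ring
    rw [this]
    exact ((huvI i).bdd_mul (hfaesm' i) (ae_of_all _ (hfbd' i))).add
      ((hξvI i).bdd_mul (hfaesm i) (ae_of_all _ (hfbd i)))
  have keyv : ∀ i : Fin M, ∫ ω, g ω i * v ω ∂μ = 0 := by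
    intro i
    have hφ : Measurable fun t : (Fin M → ℝ) × (Fin M → ℝ) × (Fin M → ℝ) =>
        (1 - t.2.1 i) * t.1 i + t.2.1 i * t.2.2 i := by
      fun_prop
    have hI : IndepFun (fun ω => g ω i) v μ := by
      have := hvindep.comp hφ measurable_id
      have heq : (fun t : (Fin M → ℝ) × (Fin M → ℝ) × (Fin M → ℝ) =>
          (1 - t.2.1 i) * t.1 i + t.2.1 i * t.2.2 i)
            ∘ (fun ω => (u ω, (fun j => f j ω), ξ ω)) = fun ω => g ω i := by
        funext ω; simp [Function.comp, hcr ω i]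
      rwa [heq] at this
    have := hI.integral_mul_eq_mul_integral (hgI i).aestronglyMeasurable hvI.aestronglyMeasurable
    simpa [Pi.mul_apply, hvmean] using this
  -- integrability of u_j * g_i
  have hugI : ∀ i j : Fin M, Integrable (fun ω => u ω j * g ω i) μ := by
    intro i j
    have : (fun ω => u ω j * g ω i)
        = fun ω => (1 - f i ω) * (u ω j * u ω i) + f i ω * (u ω j * ξ ω i) :=
      funext fun ω => by rw [hcr ω i]; ring
    rw [this]
    exact ((huuI j i).bdd_mul (hfaesm' i) (ae_of_all _ (hfbd' i))).add
      ((huξI j i).bdd_mul (hfaesm i) (ae_of_all _ (hfbd i)))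
  -- E[u_j ū_i] = (1-p) Ru j i
  have keyug : ∀ i j : Fin M, ∫ ω, u ω j * g ω i ∂μ = (1 - p) * Ru j i := by
    intro i j
    have hsplit : (fun ω => u ω j * g ω i)
        = fun ω => (u ω j * u ω i - (u ω j * u ω i) * f i ω) + (u ω j * ξ ω i) * f i ω :=
      funext fun ω => by rw [hcr ω i]; ring
    have hA : Integrable (fun ω => u ω j * u ω i * f i ω) μ := by
      rw [show (fun ω => u ω j * u ω i * f i ω)
          = fun ω => f i ω * (u ω j * u ω i) from funext fun ω => by ring]
      exact (huuI j i).bdd_mul (hfaesm i) (ae_of_all _ (hfbd i))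
    have hB : Integrable (fun ω => u ω j * ξ ω i * f i ω) μ := by
      rw [show (fun ω => u ω j * ξ ω i * f i ω)
          = fun ω => f i ω * (u ω j * ξ ω i) from funext fun ω => by ring]
      exact (huξI j i).bdd_mul (hfaesm i) (ae_of_all _ (hfbd i))
    have hAB : Integrable (fun ω => u ω j * u ω i - u ω j * u ω i * f i ω) μ :=
      (huuI j i).sub hA
    rw [hsplit, MeasureTheory.integral_add hAB hB,
      MeasureTheory.integral_sub (huuI j i) hA, key1 i j, key3 i j, ← hRu j i]
    ring
  -- the moment vector
  have hmain : (fun i => ∫ ω, d ω * g ω i ∂μ) = (1 - p) • (Ru *ᵥ wo) := by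
    funext i
    have hexp : (fun ω => d ω * g ω i)
        = fun ω => (∑ j, wo j * (u ω j * g ω i)) + g ω i * v ω := by
      funext ω
      rw [hd ω, add_mul, dotProduct, Finset.sum_mul]
      congr 1
      · exact Finset.sum_congr rfl fun j _ => by ring
      · ring
    rw [hexp, MeasureTheory.integral_add
        (integrable_finset_sum _ fun j _ => ((hugI i j).const_mul (wo j))) (hgvI i),
      MeasureTheory.integral_finset_sum _ fun j _ => ((hugI i j).const_mul (wo j)), keyv i,
      add_zero]
    have : ∀ j ∈ Finset.univ, ∫ ω, wo j * (u ω j * g ω i) ∂μ = wo j * ((1 - p) * Ru j i) := by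
      intro j _
      rw [MeasureTheory.integral_const_mul, keyug i j]
    rw [Finset.sum_congr rfl this]
    have hsymm : ∀ j, Ru j i = Ru i j := by
      intro j; rw [hRu, hRu]; simp_rw [mul_comm]
    simp only [Pi.smul_apply, smul_eq_mul, Matrix.mulVec, dotProduct]
    rw [Finset.mul_sum]
    exact Finset.sum_congr rfl fun j _ => by rw [hsymm j]; ring
  -- matrix algebra
  have hdet : IsUnit Ru.det := (Matrix.isUnit_iff_isUnit_det Ru).mp hRuUnit
  set B := Ru⁻¹ * Rr M p σξ Ru with hBdef
  have h1B : Ru * (1 + B) = Ru + Rr M p σξ Ru := by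
    rw [mul_add, mul_one, hBdef, ← Matrix.mul_assoc, Matrix.mul_nonsing_inv Ru hdet, one_mul]
  have h1Bdet : IsUnit (1 + B).det := by
    have h : IsUnit (Ru.det * (1 + B).det) := by
      rw [← Matrix.det_mul, h1B]
      exact (Matrix.isUnit_iff_isUnit_det _).mp hRubarUnit
    exact isUnit_of_mul_isUnit_right h
  have hUnit1B : IsUnit (1 + B) := (Matrix.isUnit_iff_isUnit_det _).mpr h1Bdet
  refine ⟨hUnit1B, ?_⟩
  have hinv : (Ru + Rr M p σξ Ru)⁻¹ = (1 + B)⁻¹ * Ru⁻¹ := by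
    rw [← h1B, Matrix.mul_inv_rev]
  have hQ : 1 - B * (1 + B)⁻¹ = (1 + B)⁻¹ := by
    have h := Matrix.mul_nonsing_inv (1 + B) h1Bdet
    calc (1 : Matrix (Fin M) (Fin M) ℝ) - B * (1 + B)⁻¹
        = (1 + B) * (1 + B)⁻¹ - B * (1 + B)⁻¹ := by rw [h]
      _ = (1 + B)⁻¹ := by rw [add_mul, one_mul, add_sub_cancel_right]
  rw [hmain, hinv, hQ, Matrix.mulVec_smul, Matrix.mulVec_mulVec, Matrix.mul_assoc,
    Matrix.nonsing_inv_mul Ru hdet, Matrix.mul_one]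
end

section
/- Let T := p R_u + R_r, where R_r := −P₁ ⊙ R_u + p σ_ξ² I_M and P₁ = (2p−p²)𝟙𝟙ᵀ − (p−p²)I_M. Then R_ū − T = (1−p) R_u, where R_ū := E[ū ūᵀ]; hence if R_u is invertible, then R_ū − T is invertible and the de-regularized estimate is unbiased: (R_ū − T)⁻¹ E[d·ū] = (R_ū − T)⁻¹ (1−p) r_du = wᵒ, with r_du := E[d·u]. -/
open MeasureTheory ProbabilityTheory Matrix
open scoped Matrix

section DeregAux

open MeasureTheory ProbabilityTheory

variable {Ω' : Type*} [MeasurableSpace Ω'] {μ' : Measure Ω'} [IsProbabilityMeasure μ']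

lemma dereg_integrable_mul_L2 {X Y : Ω' → ℝ} (hX : MemLp X 2 μ') (hY : MemLp Y 2 μ') :
    Integrable (fun ω => X ω * Y ω) μ' := by
  have h : MemLp (X • Y) 1 μ' :=
    hY.smul hX
  have := memLp_one_iff_integrable.mp h
  exact this

lemma dereg_memLp_two_mul_bdd {X g : Ω' → ℝ} (hX : MemLp X 2 μ') (hg : Measurable g)
    (hgb : ∀ ω, ‖g ω‖ ≤ 1) : MemLp (fun ω => g ω * X ω) 2 μ' := by
  have hφ : MemLp g ⊤ μ' :=
    memLp_top_of_bound hg.aestronglyMeasurable 1 (ae_of_all _ hgb)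
  have := hX.smul (r := 2) hφ
  exact this

lemma dereg_Ef {f : Ω' → ℝ} (hm : Measurable f) (hf01 : ∀ ω, f ω = 0 ∨ f ω = 1)
    {p : ℝ} (hp0 : 0 ≤ p) (hfp : μ' {ω | f ω = 1} = ENNReal.ofReal p) :
    ∫ ω, f ω ∂μ' = p := by
  have hs : MeasurableSet {ω | f ω = 1} := hm (measurableSet_singleton 1)
  have hpt : ∀ ω, f ω = Set.indicator {ω | f ω = 1} (1 : Ω' → ℝ) ω := by
    intro ω
    rcases hf01 ω with h | h <;> simp [Set.indicator, h]
  rw [integral_congr_ae (ae_of_all _ hpt), integral_indicator_one hs, measureReal_def, hfp,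
    ENNReal.toReal_ofReal hp0]

end DeregAux

/-- with the de-regularization matrix `T := p R_u + R_r` one has
`R_ū − T = (1−p) R_u`; hence if `R_u` is invertible then `R_ū − T` is invertible and the
de-regularized estimate is unbiased: `(R_ū − T)⁻¹ E[d·ū] = (R_ū − T)⁻¹ (1−p) r_du = wᵒ`. -/


theorem deregularized_estimate_unbiased
    {Ω : Type*} [MeasurableSpace Ω] (μ : Measure Ω) [IsProbabilityMeasure μ]
    (M : ℕ) (p : ℝ) (hp0 : 0 ≤ p) (hp1 : p < 1) (σξ : ℝ) (hσξ : 0 ≤ σξ)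
    (u ξ : Ω → Fin M → ℝ) (f : Fin M → Ω → ℝ)
    (humeas : Measurable u) (hξmeas : Measurable ξ) (hfmeas : ∀ j, Measurable (f j))
    (huL2 : ∀ i, MemLp (fun ω => u ω i) 2 μ) (hξL2 : ∀ i, MemLp (fun ω => ξ ω i) 2 μ)
    (humean : ∀ i, ∫ ω, u ω i ∂μ = 0) (hξmean : ∀ i, ∫ ω, ξ ω i ∂μ = 0)
    (Ru : Matrix (Fin M) (Fin M) ℝ)
    (hRu : ∀ i j, Ru i j = ∫ ω, u ω i * u ω j ∂μ)
    (hξcov : ∀ i j, ∫ ω, ξ ω i * ξ ω j ∂μ = if i = j then σξ ^ 2 else 0)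
    (hf01 : ∀ j ω, f j ω = 0 ∨ f j ω = 1)
    (hfp : ∀ j, μ {ω | f j ω = 1} = ENNReal.ofReal p)
    (hindep : iIndepFun (missFun M f u ξ) μ)
    (wo : Fin M → ℝ) (v : Ω → ℝ) (σv : ℝ)
    (hvmeas : Measurable v) (hvL2 : MemLp v 2 μ)
    (hvmean : ∫ ω, v ω ∂μ = 0) (hvvar : ∫ ω, (v ω) ^ 2 ∂μ = σv ^ 2)
    (hvindep : IndepFun (fun ω => (u ω, (fun j => f j ω), ξ ω)) v μ)
    (d : Ω → ℝ) (hd : ∀ ω, d ω = u ω ⬝ᵥ wo + v ω)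
    (Rubar : Matrix (Fin M) (Fin M) ℝ)
    (hRubar : ∀ i j, Rubar i j = ∫ ω, censReg M f u ξ ω i * censReg M f u ξ ω j ∂μ)
    (T : Matrix (Fin M) (Fin M) ℝ)
    (hT : T = p • Ru + Rr M p σξ Ru) :
    Rubar - T = (1 - p) • Ru
    ∧ (IsUnit Ru →
        IsUnit (Rubar - T)
        ∧ (Rubar - T)⁻¹ *ᵥ (fun i => ∫ ω, d ω * censReg M f u ξ ω i ∂μ) = wo
        ∧ (Rubar - T)⁻¹ *ᵥ ((1 - p) • fun i => ∫ ω, d ω * u ω i ∂μ) = wo) := by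
  
  classical
  have hub : ∀ ω i, censReg M f u ξ ω i = (1 - f i ω) * u ω i + f i ω * ξ ω i := by
    intro ω i
    simp only [censReg, Matrix.sub_mulVec, Matrix.one_mulVec, Matrix.mulVec_diagonal,
      Pi.add_apply, Pi.sub_apply]
    ring
  have hmeasMiss : ∀ i, Measurable (missFun M f u ξ i) := by
    intro i
    cases i with
    | F j => exact hfmeas j
    | U => exact humeas
    | Xi => exact hξmeas
  have hu_i : ∀ i, Measurable fun ω => u ω i := fun i => humeas.eval
  have hξ_i : ∀ i, Measurable fun ω => ξ ω i := fun i => hξmeas.eval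
  have hfbd : ∀ j ω, ‖f j ω‖ ≤ 1 := by
    intro j ω; rcases hf01 j ω with h | h <;> simp [h]
  have h1fbd : ∀ j ω, ‖1 - f j ω‖ ≤ 1 := by
    intro j ω; rcases hf01 j ω with h | h <;> simp [h]
  have hfint : ∀ j, Integrable (f j) μ := fun j =>
    (memLp_top_of_bound (hfmeas j).aestronglyMeasurable 1
      (ae_of_all _ (hfbd j))).integrable le_top
  have hEf : ∀ j, ∫ ω, f j ω ∂μ = p := fun j => dereg_Ef (hfmeas j) (hf01 j) hp0 (hfp j)
  have hE1f : ∀ j, ∫ ω, (1 - f j ω) ∂μ = 1 - p := by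
    intro j
    rw [integral_sub (integrable_const 1) (hfint j), hEf j]
    simp
  -- independence facts
  have hIFF : ∀ i j : Fin M, i ≠ j → IndepFun (f i) (f j) μ := fun i j hij =>
    hindep.indepFun (show (MissIdx.F i : MissIdx M) ≠ MissIdx.F j by
      intro h; exact hij (by injection h))
  have hIUXi : IndepFun u ξ μ :=
    hindep.indepFun (show (MissIdx.U : MissIdx M) ≠ MissIdx.Xi from fun h => by injection h)
  have hIFU : ∀ i : Fin M, IndepFun (f i) u μ := fun i =>
    hindep.indepFun (show (MissIdx.F i : MissIdx M) ≠ MissIdx.U from fun h => by injection h)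
  have hIFXi : ∀ i : Fin M, IndepFun (f i) ξ μ := fun i =>
    hindep.indepFun (show (MissIdx.F i : MissIdx M) ≠ MissIdx.Xi from fun h => by injection h)
  have hIPairUXi : ∀ i : Fin M, IndepFun (fun ω => (u ω, ξ ω)) (f i) μ := fun i =>
    hindep.indepFun_prodMk hmeasMiss MissIdx.U MissIdx.Xi (MissIdx.F i)
      (fun h => by injection h) (fun h => by injection h)
  have hIFFpair : ∀ i j : Fin M, i ≠ j →
      IndepFun (fun ω => (f i ω, f j ω)) (fun ω => (u ω, ξ ω)) μ := fun i j hij =>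
    hindep.indepFun_prodMk_prodMk hmeasMiss (MissIdx.F i) (MissIdx.F j) MissIdx.U MissIdx.Xi
      (fun h => by injection h) (fun h => by injection h)
      (fun h => by injection h) (fun h => by injection h)
  -- zero cross moments
  have hEuxi : ∀ k l, ∫ ω, u ω k * ξ ω l ∂μ = 0 := by
    intro k l
    have hI : IndepFun (fun ω => u ω k) (fun ω => ξ ω l) μ :=
      hIUXi.comp (measurable_pi_apply k) (measurable_pi_apply l)
    rw [hI.integral_fun_mul_eq_mul_integral (hu_i k).aestronglyMeasurable (hξ_i l).aestronglyMeasurable,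
      hξmean l, mul_zero]
  have hExiu : ∀ k l, ∫ ω, ξ ω k * u ω l ∂μ = 0 := by
    intro k l
    have hI : IndepFun (fun ω => ξ ω k) (fun ω => u ω l) μ :=
      hIUXi.symm.comp (measurable_pi_apply k) (measurable_pi_apply l)
    rw [hI.integral_fun_mul_eq_mul_integral (hξ_i k).aestronglyMeasurable (hu_i l).aestronglyMeasurable,
      humean l, mul_zero]
  have hE1f1f : ∀ i j : Fin M, i ≠ j →
      ∫ ω, (1 - f i ω) * (1 - f j ω) ∂μ = (1 - p) * (1 - p) := by
    intro i j hij
    have hI : IndepFun (fun ω => 1 - f i ω) (fun ω => 1 - f j ω) μ :=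
      (hIFF i j hij).comp (measurable_const.sub measurable_id)
        (measurable_const.sub measurable_id)
    rw [hI.integral_fun_mul_eq_mul_integral ((measurable_const.sub (hfmeas i)).aestronglyMeasurable)
      ((measurable_const.sub (hfmeas j)).aestronglyMeasurable), hE1f i, hE1f j]
  -- diagonal entries
  have hdiag : ∀ i, ∫ ω, censReg M f u ξ ω i * censReg M f u ξ ω i ∂μ
      = (1 - p) * Ru i i + p * σξ ^ 2 := by
    intro i
    have hpt : ∀ ω, censReg M f u ξ ω i * censReg M f u ξ ω i
        = (1 - f i ω) * (u ω i * u ω i) + f i ω * (ξ ω i * ξ ω i) := by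
      intro ω; rcases hf01 i ω with h | h <;> simp [hub, h]
    rw [integral_congr_ae (ae_of_all _ hpt)]
    have i1 : Integrable (fun ω => (1 - f i ω) * (u ω i * u ω i)) μ :=
      (dereg_integrable_mul_L2 (huL2 i) (huL2 i)).bdd_mul
        ((measurable_const.sub (hfmeas i)).aestronglyMeasurable) (ae_of_all _ (h1fbd i))
    have i2 : Integrable (fun ω => f i ω * (ξ ω i * ξ ω i)) μ :=
      (dereg_integrable_mul_L2 (hξL2 i) (hξL2 i)).bdd_mul
        ((hfmeas i).aestronglyMeasurable) (ae_of_all _ (hfbd i))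
    rw [integral_add i1 i2]
    have e1 : ∫ ω, (1 - f i ω) * (u ω i * u ω i) ∂μ = (1 - p) * Ru i i := by
      have hI : IndepFun (fun ω => 1 - f i ω) (fun ω => u ω i * u ω i) μ :=
        (hIFU i).comp (measurable_const.sub measurable_id)
          ((measurable_pi_apply i).mul (measurable_pi_apply i))
      rw [hI.integral_fun_mul_eq_mul_integral ((measurable_const.sub (hfmeas i)).aestronglyMeasurable)
        (((hu_i i).mul (hu_i i)).aestronglyMeasurable), hE1f i, hRu]
    have e2 : ∫ ω, f i ω * (ξ ω i * ξ ω i) ∂μ = p * σξ ^ 2 := by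
      have hI : IndepFun (f i) (fun ω => ξ ω i * ξ ω i) μ :=
        (hIFXi i).comp measurable_id ((measurable_pi_apply i).mul (measurable_pi_apply i))
      rw [hI.integral_fun_mul_eq_mul_integral (hfmeas i).aestronglyMeasurable
        (((hξ_i i).mul (hξ_i i)).aestronglyMeasurable), hEf i, hξcov i i, if_pos rfl]
    rw [e1, e2]
  -- off-diagonal entries
  have hoff : ∀ i j : Fin M, i ≠ j → ∫ ω, censReg M f u ξ ω i * censReg M f u ξ ω j ∂μ
      = (1 - p) * (1 - p) * Ru i j := by
    intro i j hij
    have hpt : ∀ ω, censReg M f u ξ ω i * censReg M f u ξ ω j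
        = ((1 - f i ω) * (1 - f j ω)) * (u ω i * u ω j)
          + (((1 - f i ω) * f j ω) * (u ω i * ξ ω j)
          + ((f i ω * (1 - f j ω)) * (ξ ω i * u ω j)
          + (f i ω * f j ω) * (ξ ω i * ξ ω j))) := by
      intro ω; rw [hub, hub]; ring
    rw [integral_congr_ae (ae_of_all _ hpt)]
    have b1 : ∀ ω, ‖(1 - f i ω) * (1 - f j ω)‖ ≤ 1 := fun ω => by
      calc ‖(1 - f i ω) * (1 - f j ω)‖ = ‖1 - f i ω‖ * ‖1 - f j ω‖ := norm_mul _ _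
      _ ≤ 1 * 1 := mul_le_mul (h1fbd i ω) (h1fbd j ω) (norm_nonneg _) zero_le_one
      _ = 1 := one_mul 1
    have b2 : ∀ ω, ‖(1 - f i ω) * f j ω‖ ≤ 1 := fun ω => by
      calc ‖(1 - f i ω) * f j ω‖ = ‖1 - f i ω‖ * ‖f j ω‖ := norm_mul _ _
      _ ≤ 1 * 1 := mul_le_mul (h1fbd i ω) (hfbd j ω) (norm_nonneg _) zero_le_one
      _ = 1 := one_mul 1
    have b3 : ∀ ω, ‖f i ω * (1 - f j ω)‖ ≤ 1 := fun ω => by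
      calc ‖f i ω * (1 - f j ω)‖ = ‖f i ω‖ * ‖1 - f j ω‖ := norm_mul _ _
      _ ≤ 1 * 1 := mul_le_mul (hfbd i ω) (h1fbd j ω) (norm_nonneg _) zero_le_one
      _ = 1 := one_mul 1
    have b4 : ∀ ω, ‖f i ω * f j ω‖ ≤ 1 := fun ω => by
      calc ‖f i ω * f j ω‖ = ‖f i ω‖ * ‖f j ω‖ := norm_mul _ _
      _ ≤ 1 * 1 := mul_le_mul (hfbd i ω) (hfbd j ω) (norm_nonneg _) zero_le_one
      _ = 1 := one_mul 1
    have m1 : Measurable fun ω => (1 - f i ω) * (1 - f j ω) :=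
      (measurable_const.sub (hfmeas i)).mul (measurable_const.sub (hfmeas j))
    have m2 : Measurable fun ω => (1 - f i ω) * f j ω :=
      (measurable_const.sub (hfmeas i)).mul (hfmeas j)
    have m3 : Measurable fun ω => f i ω * (1 - f j ω) :=
      (hfmeas i).mul (measurable_const.sub (hfmeas j))
    have m4 : Measurable fun ω => f i ω * f j ω := (hfmeas i).mul (hfmeas j)
    have i1 : Integrable (fun ω => ((1 - f i ω) * (1 - f j ω)) * (u ω i * u ω j)) μ :=
      (dereg_integrable_mul_L2 (huL2 i) (huL2 j)).bdd_mul m1.aestronglyMeasurable (ae_of_all _ (b1))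
    have i2 : Integrable (fun ω => ((1 - f i ω) * f j ω) * (u ω i * ξ ω j)) μ :=
      (dereg_integrable_mul_L2 (huL2 i) (hξL2 j)).bdd_mul m2.aestronglyMeasurable (ae_of_all _ (b2))
    have i3 : Integrable (fun ω => (f i ω * (1 - f j ω)) * (ξ ω i * u ω j)) μ :=
      (dereg_integrable_mul_L2 (hξL2 i) (huL2 j)).bdd_mul m3.aestronglyMeasurable (ae_of_all _ (b3))
    have i4 : Integrable (fun ω => (f i ω * f j ω) * (ξ ω i * ξ ω j)) μ :=
      (dereg_integrable_mul_L2 (hξL2 i) (hξL2 j)).bdd_mul m4.aestronglyMeasurable (ae_of_all _ (b4))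
    have i34 : Integrable (fun ω => (f i ω * (1 - f j ω)) * (ξ ω i * u ω j)
        + (f i ω * f j ω) * (ξ ω i * ξ ω j)) μ := i3.add i4
    have i234 : Integrable (fun ω => ((1 - f i ω) * f j ω) * (u ω i * ξ ω j)
        + ((f i ω * (1 - f j ω)) * (ξ ω i * u ω j)
        + (f i ω * f j ω) * (ξ ω i * ξ ω j))) μ := i2.add i34
    rw [integral_add i1 i234, integral_add i2 i34, integral_add i3 i4]
    have e1 : ∫ ω, ((1 - f i ω) * (1 - f j ω)) * (u ω i * u ω j) ∂μ
        = (1 - p) * (1 - p) * Ru i j := by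
      have hI : IndepFun (fun ω => (1 - f i ω) * (1 - f j ω)) (fun ω => u ω i * u ω j) μ :=
        (hIFFpair i j hij).comp
          (show Measurable fun q : ℝ × ℝ => (1 - q.1) * (1 - q.2) by fun_prop)
          (show Measurable fun q : (Fin M → ℝ) × (Fin M → ℝ) => q.1 i * q.1 j by fun_prop)
      rw [hI.integral_fun_mul_eq_mul_integral m1.aestronglyMeasurable
        (((hu_i i).mul (hu_i j)).aestronglyMeasurable), hE1f1f i j hij, hRu]
    have e2 : ∫ ω, ((1 - f i ω) * f j ω) * (u ω i * ξ ω j) ∂μ = 0 := by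
      have hI : IndepFun (fun ω => (1 - f i ω) * f j ω) (fun ω => u ω i * ξ ω j) μ :=
        (hIFFpair i j hij).comp
          (show Measurable fun q : ℝ × ℝ => (1 - q.1) * q.2 by fun_prop)
          (show Measurable fun q : (Fin M → ℝ) × (Fin M → ℝ) => q.1 i * q.2 j by fun_prop)
      rw [hI.integral_fun_mul_eq_mul_integral m2.aestronglyMeasurable
        (((hu_i i).mul (hξ_i j)).aestronglyMeasurable), hEuxi i j, mul_zero]
    have e3 : ∫ ω, (f i ω * (1 - f j ω)) * (ξ ω i * u ω j) ∂μ = 0 := by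
      have hI : IndepFun (fun ω => f i ω * (1 - f j ω)) (fun ω => ξ ω i * u ω j) μ :=
        (hIFFpair i j hij).comp
          (show Measurable fun q : ℝ × ℝ => q.1 * (1 - q.2) by fun_prop)
          (show Measurable fun q : (Fin M → ℝ) × (Fin M → ℝ) => q.2 i * q.1 j by fun_prop)
      rw [hI.integral_fun_mul_eq_mul_integral m3.aestronglyMeasurable
        (((hξ_i i).mul (hu_i j)).aestronglyMeasurable), hExiu i j, mul_zero]
    have e4 : ∫ ω, (f i ω * f j ω) * (ξ ω i * ξ ω j) ∂μ = 0 := by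
      have hI : IndepFun (fun ω => f i ω * f j ω) (fun ω => ξ ω i * ξ ω j) μ :=
        (hIFFpair i j hij).comp
          (show Measurable fun q : ℝ × ℝ => q.1 * q.2 by fun_prop)
          (show Measurable fun q : (Fin M → ℝ) × (Fin M → ℝ) => q.2 i * q.2 j by fun_prop)
      rw [hI.integral_fun_mul_eq_mul_integral m4.aestronglyMeasurable
        (((hξ_i i).mul (hξ_i j)).aestronglyMeasurable), hξcov i j, if_neg hij, mul_zero]
    rw [e1, e2, e3, e4]
    ring
  -- Part 1
  have part1 : Rubar - T = (1 - p) • Ru := by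
    ext i j
    by_cases h : i = j
    · subst h
      simp only [Matrix.sub_apply, Matrix.smul_apply, smul_eq_mul, hRubar, hdiag i, hT,
        Matrix.add_apply, Rr, Pone, onesMat, Matrix.neg_apply, Matrix.hadamard_apply,
        Matrix.one_apply_eq, Matrix.of_apply]
      ring
    · simp only [Matrix.sub_apply, Matrix.smul_apply, smul_eq_mul, hRubar, hoff i j h, hT,
        Matrix.add_apply, Rr, Pone, onesMat, Matrix.neg_apply, Matrix.hadamard_apply,
        Matrix.one_apply_ne h, Matrix.of_apply]
      ring
  refine ⟨part1, fun hu => ?_⟩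
  -- invertibility
  have hdet1p : IsUnit ((1 : ℝ) - p) := isUnit_iff_ne_zero.mpr (by linarith)
  have hAdet : IsUnit ((1 - p) • Ru).det := by
    rw [Matrix.det_smul]
    exact (hdet1p.pow _).mul ((Matrix.isUnit_iff_isUnit_det Ru).mp hu)
  have hAunit : IsUnit ((1 - p) • Ru) := (Matrix.isUnit_iff_isUnit_det _).mpr hAdet
  -- symmetric covariance
  have hRusymm : ∀ i k, Ru i k = Ru k i := fun i k => by
    rw [hRu, hRu]
    exact integral_congr_ae (ae_of_all _ fun ω => mul_comm _ _)
  -- dot-product helpers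
  have hdotm : Measurable fun x : Fin M → ℝ => x ⬝ᵥ wo :=
    Finset.measurable_sum Finset.univ fun k _ => (measurable_pi_apply k).mul measurable_const
  have hdotL2 : MemLp (fun ω => u ω ⬝ᵥ wo) 2 μ := by
    have h := memLp_finset_sum' (μ := μ) Finset.univ
      (f := fun k (ω : Ω) => wo k * u ω k) (fun k _ => (huL2 k).const_mul (wo k))
    have heq : (fun ω => u ω ⬝ᵥ wo) = fun ω => ∑ k, wo k * u ω k := by
      funext ω
      simp [dotProduct, mul_comm]
    rw [heq, show (fun ω => ∑ k : Fin M, wo k * u ω k) = ∑ k : Fin M, fun ω => wo k * u ω k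
      from funext fun ω => by simp]
    exact h
  have hsumU : ∀ i, ∫ ω, (u ω ⬝ᵥ wo) * u ω i ∂μ = ∑ k, wo k * Ru k i := by
    intro i
    have hpt : ∀ ω, (u ω ⬝ᵥ wo) * u ω i = ∑ k, wo k * (u ω k * u ω i) := by
      intro ω
      simp only [dotProduct, Finset.sum_mul]
      exact Finset.sum_congr rfl fun k _ => by ring
    rw [integral_congr_ae (ae_of_all _ hpt),
      integral_finset_sum _ (fun k _ => (dereg_integrable_mul_L2 (huL2 k) (huL2 i)).const_mul (wo k))]
    exact Finset.sum_congr rfl fun k _ => by rw [integral_const_mul, hRu]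
  have hsumXi : ∀ i, ∫ ω, (u ω ⬝ᵥ wo) * ξ ω i ∂μ = 0 := by
    intro i
    have hpt : ∀ ω, (u ω ⬝ᵥ wo) * ξ ω i = ∑ k, wo k * (u ω k * ξ ω i) := by
      intro ω
      simp only [dotProduct, Finset.sum_mul]
      exact Finset.sum_congr rfl fun k _ => by ring
    rw [integral_congr_ae (ae_of_all _ hpt),
      integral_finset_sum _ (fun k _ => (dereg_integrable_mul_L2 (huL2 k) (hξL2 i)).const_mul (wo k))]
    exact Finset.sum_eq_zero fun k _ => by rw [integral_const_mul, hEuxi k i, mul_zero]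
  -- E[d u_i]
  have hvu : ∀ i, ∫ ω, v ω * u ω i ∂μ = 0 := by
    intro i
    have hI : IndepFun v (fun ω => u ω i) μ :=
      hvindep.symm.comp measurable_id
        (show Measurable fun t : (Fin M → ℝ) × (Fin M → ℝ) × (Fin M → ℝ) => t.1 i by fun_prop)
    rw [hI.integral_fun_mul_eq_mul_integral hvmeas.aestronglyMeasurable (hu_i i).aestronglyMeasurable,
      hvmean, zero_mul]
  have hdu : ∀ i, ∫ ω, d ω * u ω i ∂μ = ∑ k, wo k * Ru k i := by
    intro i
    have hpt : ∀ ω, d ω * u ω i = (u ω ⬝ᵥ wo) * u ω i + v ω * u ω i := by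
      intro ω; rw [hd]; ring
    rw [integral_congr_ae (ae_of_all _ hpt),
      integral_add (dereg_integrable_mul_L2 hdotL2 (huL2 i))
        (dereg_integrable_mul_L2 hvL2 (huL2 i)), hsumU i, hvu i, add_zero]
  -- E[d ubar_i]
  have hdub : ∀ i, ∫ ω, d ω * censReg M f u ξ ω i ∂μ = (1 - p) * ∑ k, wo k * Ru k i := by
    intro i
    have hpt : ∀ ω, d ω * censReg M f u ξ ω i
        = (1 - f i ω) * ((u ω ⬝ᵥ wo) * u ω i)
          + (f i ω * ((u ω ⬝ᵥ wo) * ξ ω i)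
          + v ω * ((1 - f i ω) * u ω i + f i ω * ξ ω i)) := by
      intro ω; rw [hd, hub]; ring
    rw [integral_congr_ae (ae_of_all _ hpt)]
    have hubL2 : MemLp (fun ω => (1 - f i ω) * u ω i + f i ω * ξ ω i) 2 μ :=
      (dereg_memLp_two_mul_bdd (huL2 i) (measurable_const.sub (hfmeas i)) (h1fbd i)).add
        (dereg_memLp_two_mul_bdd (hξL2 i) (hfmeas i) (hfbd i))
    have i1 : Integrable (fun ω => (1 - f i ω) * ((u ω ⬝ᵥ wo) * u ω i)) μ :=
      (dereg_integrable_mul_L2 hdotL2 (huL2 i)).bdd_mul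
        ((measurable_const.sub (hfmeas i)).aestronglyMeasurable) (ae_of_all _ (h1fbd i))
    have i2 : Integrable (fun ω => f i ω * ((u ω ⬝ᵥ wo) * ξ ω i)) μ :=
      (dereg_integrable_mul_L2 hdotL2 (hξL2 i)).bdd_mul
        ((hfmeas i).aestronglyMeasurable) (ae_of_all _ (hfbd i))
    have i3 : Integrable (fun ω => v ω * ((1 - f i ω) * u ω i + f i ω * ξ ω i)) μ :=
      dereg_integrable_mul_L2 hvL2 hubL2
    have i23 : Integrable (fun ω => f i ω * ((u ω ⬝ᵥ wo) * ξ ω i)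
        + v ω * ((1 - f i ω) * u ω i + f i ω * ξ ω i)) μ := i2.add i3
    rw [integral_add i1 i23, integral_add i2 i3]
    have e1 : ∫ ω, (1 - f i ω) * ((u ω ⬝ᵥ wo) * u ω i) ∂μ
        = (1 - p) * ∑ k, wo k * Ru k i := by
      have hI : IndepFun (fun ω => 1 - f i ω) (fun ω => (u ω ⬝ᵥ wo) * u ω i) μ :=
        (hIFU i).comp (measurable_const.sub measurable_id)
          (hdotm.mul (measurable_pi_apply i))
      rw [hI.integral_fun_mul_eq_mul_integral ((measurable_const.sub (hfmeas i)).aestronglyMeasurable)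
        ((hdotm.comp humeas).mul (hu_i i)).aestronglyMeasurable, hE1f i, hsumU i]
    have e2 : ∫ ω, f i ω * ((u ω ⬝ᵥ wo) * ξ ω i) ∂μ = 0 := by
      have hI : IndepFun (f i) (fun ω => (u ω ⬝ᵥ wo) * ξ ω i) μ :=
        (hIPairUXi i).symm.comp measurable_id
          (show Measurable fun q : (Fin M → ℝ) × (Fin M → ℝ) => (q.1 ⬝ᵥ wo) * q.2 i from
            (hdotm.comp measurable_fst).mul ((measurable_pi_apply i).comp measurable_snd))
      rw [hI.integral_fun_mul_eq_mul_integral (hfmeas i).aestronglyMeasurable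
        ((hdotm.comp humeas).mul (hξ_i i)).aestronglyMeasurable, hsumXi i, mul_zero]
    have e3 : ∫ ω, v ω * ((1 - f i ω) * u ω i + f i ω * ξ ω i) ∂μ = 0 := by
      have hI : IndepFun v (fun ω => (1 - f i ω) * u ω i + f i ω * ξ ω i) μ :=
        hvindep.symm.comp measurable_id
          (show Measurable fun t : (Fin M → ℝ) × (Fin M → ℝ) × (Fin M → ℝ) =>
            (1 - t.2.1 i) * t.1 i + t.2.1 i * t.2.2 i by fun_prop)
      rw [hI.integral_fun_mul_eq_mul_integral hvmeas.aestronglyMeasurable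
        (((measurable_const.sub (hfmeas i)).mul (hu_i i)).add
          ((hfmeas i).mul (hξ_i i))).aestronglyMeasurable, hvmean, zero_mul]
    rw [e1, e2, e3]
    ring
  -- wrap up
  have hvecA : ∀ g : Fin M → ℝ, (∀ i, g i = (1 - p) * ∑ k, wo k * Ru k i) →
      g = ((1 - p) • Ru) *ᵥ wo := by
    intro g hg
    funext i
    rw [hg i, Matrix.smul_mulVec, Pi.smul_apply, smul_eq_mul]
    congr 1
    simp only [Matrix.mulVec, dotProduct]
    exact Finset.sum_congr rfl fun k _ => by rw [hRusymm i k]; ring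
  have hinv : ((1 - p) • Ru)⁻¹ *ᵥ (((1 - p) • Ru) *ᵥ wo) = wo := by
    rw [Matrix.mulVec_mulVec, Matrix.nonsing_inv_mul _ hAdet, Matrix.one_mulVec]
  refine ⟨part1 ▸ hAunit, ?_, ?_⟩
  · rw [part1, hvecA _ fun i => hdub i, hinv]
  · rw [part1, hvecA ((1 - p) • fun i => ∫ ω, d ω * u ω i ∂μ)
      (fun i => by rw [Pi.smul_apply, smul_eq_mul, hdu i]), hinv]
end

section
/- Suppose R_u is positive definite and 0 ≤ p < 1. Define the de-regularized cost J′(w) := E[(d − ūᵀ w)²] − wᵀ T w with T := p R_u + R_r, where R_r := −P₁ ⊙ R_u + p σ_ξ² I_M and P₁ = (2p−p²)𝟙𝟙ᵀ − (p−p²)I_M. Then for every w ∈ ℝ^M, J′(w) − J′(wᵒ) = (1−p)(w − wᵒ)ᵀ R_u (w − wᵒ); in particular J′ is strictly convex and wᵒ is its unique global minimizer. -/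
open MeasureTheory ProbabilityTheory Matrix
open scoped Matrix

section Helpers

variable {Ω : Type*} [MeasurableSpace Ω] {μ : MeasureTheory.Measure Ω}

lemma l2_mul_integrable {g h : Ω → ℝ} (hg : MeasureTheory.MemLp g 2 μ)
    (hh : MeasureTheory.MemLp h 2 μ) :
    MeasureTheory.Integrable (fun ω => g ω * h ω) μ := by
  refine ((hg.integrable_sq.add hh.integrable_sq).const_mul (1/2)).mono'
    (hg.1.mul hh.1) (Filter.Eventually.of_forall fun ω => ?_)
  rw [Real.norm_eq_abs, abs_mul]; simp only [Pi.add_apply]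
  nlinarith [sq_nonneg (|g ω| - |h ω|), sq_abs (g ω), sq_abs (h ω), abs_nonneg (g ω),
    abs_nonneg (h ω)]

lemma bdd_mul_integrable {c g : Ω → ℝ} (hc : Measurable c) (hbd : ∀ ω, |c ω| ≤ 1)
    (hg : MeasureTheory.Integrable g μ) : MeasureTheory.Integrable (fun ω => c ω * g ω) μ :=
  hg.bdd_mul (c := 1) hc.aestronglyMeasurable (Filter.Eventually.of_forall fun ω => by simpa using hbd ω)

lemma memℒp2_of_bdd_mul {c g : Ω → ℝ} (hc : Measurable c) (hbd : ∀ ω, |c ω| ≤ 1)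
    (hg : MeasureTheory.MemLp g 2 μ) : MeasureTheory.MemLp (fun ω => c ω * g ω) 2 μ := by
  refine MeasureTheory.MemLp.of_le hg (hc.aestronglyMeasurable.mul hg.1)
    (Filter.Eventually.of_forall fun ω => ?_)
  rw [Real.norm_eq_abs, Real.norm_eq_abs, abs_mul]
  nlinarith [hbd ω, abs_nonneg (g ω), abs_nonneg (c ω)]

end Helpers

/-- with `R_u` positive definite and `0 ≤ p < 1`, the de-regularized cost
`J′(w) = E[(d − ūᵀ w)²] − wᵀ T w` with `T = p R_u + R_r` satisfies
`J′(w) − J′(wᵒ) = (1−p)(w − wᵒ)ᵀ R_u (w − wᵒ)`; in particular `J′` is strictly convex and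
`wᵒ` is its unique global minimizer. -/
theorem deregularized_cost_strictly_convex
    {Ω : Type*} [MeasurableSpace Ω] (μ : Measure Ω) [IsProbabilityMeasure μ]
    (M : ℕ) (p : ℝ) (hp0 : 0 ≤ p) (hp1 : p < 1) (σξ : ℝ) (hσξ : 0 ≤ σξ)
    (u ξ : Ω → Fin M → ℝ) (f : Fin M → Ω → ℝ)
    (humeas : Measurable u) (hξmeas : Measurable ξ) (hfmeas : ∀ j, Measurable (f j))
    (huL2 : ∀ i, MemLp (fun ω => u ω i) 2 μ) (hξL2 : ∀ i, MemLp (fun ω => ξ ω i) 2 μ)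
    (humean : ∀ i, ∫ ω, u ω i ∂μ = 0) (hξmean : ∀ i, ∫ ω, ξ ω i ∂μ = 0)
    (Ru : Matrix (Fin M) (Fin M) ℝ)
    (hRu : ∀ i j, Ru i j = ∫ ω, u ω i * u ω j ∂μ)
    (hRuPD : Ru.PosDef)
    (hξcov : ∀ i j, ∫ ω, ξ ω i * ξ ω j ∂μ = if i = j then σξ ^ 2 else 0)
    (hf01 : ∀ j ω, f j ω = 0 ∨ f j ω = 1)
    (hfp : ∀ j, μ {ω | f j ω = 1} = ENNReal.ofReal p)
    (hindep : iIndepFun (missFun M f u ξ) μ)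
    (wo : Fin M → ℝ) (v : Ω → ℝ) (σv : ℝ)
    (hvmeas : Measurable v) (hvL2 : MemLp v 2 μ)
    (hvmean : ∫ ω, v ω ∂μ = 0) (hvvar : ∫ ω, (v ω) ^ 2 ∂μ = σv ^ 2)
    (hvindep : IndepFun (fun ω => (u ω, (fun j => f j ω), ξ ω)) v μ)
    (d : Ω → ℝ) (hd : ∀ ω, d ω = u ω ⬝ᵥ wo + v ω)
    (T : Matrix (Fin M) (Fin M) ℝ)
    (hT : T = p • Ru + Rr M p σξ Ru)
    (J' : (Fin M → ℝ) → ℝ)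
    (hJ' : ∀ w, J' w = (∫ ω, (d ω - censReg M f u ξ ω ⬝ᵥ w) ^ 2 ∂μ) - w ⬝ᵥ (T *ᵥ w)) :
    (∀ w : Fin M → ℝ,
        J' w - J' wo = (1 - p) * ((w - wo) ⬝ᵥ (Ru *ᵥ (w - wo))))
    ∧ StrictConvexOn ℝ Set.univ J'
    ∧ (∀ w : Fin M → ℝ, w ≠ wo → J' wo < J' w) := by
  
  classical
  have hq0 : (0:ℝ) < 1 - p := by linarith
  -- coordinate random variables
  have hu_m : ∀ i, Measurable fun ω => u ω i := fun i => (measurable_pi_apply i).comp humeas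
  have hξ_m : ∀ i, Measurable fun ω => ξ ω i := fun i => (measurable_pi_apply i).comp hξmeas
  -- measurable auxiliary maps (stated over ℝ so instances are found)
  have msub : Measurable (fun x : ℝ => 1 - x) := measurable_const.sub measurable_id
  have mid : Measurable (fun x : ℝ => x) := measurable_id
  have mev : ∀ k : Fin M, Measurable (fun y : Fin M → ℝ => y k) := fun k =>
    measurable_pi_apply k
  have mevmul : ∀ k l : Fin M, Measurable (fun y : Fin M → ℝ => y k * y l) := fun k l =>
    (measurable_pi_apply k).mul (measurable_pi_apply l)
  have msubsub : Measurable (fun x : ℝ × ℝ => (1 - x.1) * (1 - x.2)) :=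
    (measurable_const.sub measurable_fst).mul (measurable_const.sub measurable_snd)
  have msubmul : Measurable (fun x : ℝ × ℝ => (1 - x.1) * x.2) :=
    (measurable_const.sub measurable_fst).mul measurable_snd
  have mmulsub : Measurable (fun x : ℝ × ℝ => x.1 * (1 - x.2)) :=
    measurable_fst.mul (measurable_const.sub measurable_snd)
  have mmul2 : Measurable (fun x : ℝ × ℝ => x.1 * x.2) := measurable_fst.mul measurable_snd
  have mevp : ∀ k l : Fin M,
      Measurable (fun y : (Fin M → ℝ) × (Fin M → ℝ) => y.1 k * y.2 l) := fun k l =>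
    ((measurable_pi_apply k).comp measurable_fst).mul
      ((measurable_pi_apply l).comp measurable_snd)
  -- the censored regressor coordinates
  set ub : Fin M → Ω → ℝ := fun i ω => (1 - f i ω) * u ω i + f i ω * ξ ω i with hub_def
  have hcrE : ∀ ω i, censReg M f u ξ ω i = ub i ω := by
    intro ω i
    simp only [hub_def, censReg, Matrix.sub_mulVec, Matrix.one_mulVec, Matrix.mulVec_diagonal,
      Pi.add_apply, Pi.sub_apply]
    ring
  have hub_m : ∀ i, Measurable (ub i) := fun i =>
    ((measurable_const.sub (hfmeas i)).mul (hu_m i)).add ((hfmeas i).mul (hξ_m i))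
  have hf_bd : ∀ j ω, |f j ω| ≤ 1 := by
    intro j ω; rcases hf01 j ω with h | h <;> simp [h]
  have hg_bd : ∀ j ω, |1 - f j ω| ≤ 1 := by
    intro j ω; rcases hf01 j ω with h | h <;> simp [h]
  have hgf_bd : ∀ (a b : Ω → ℝ), (∀ ω, |a ω| ≤ 1) → (∀ ω, |b ω| ≤ 1) →
      ∀ ω, |a ω * b ω| ≤ 1 := by
    intro a b ha hb ω; rw [abs_mul]
    exact mul_le_one₀ (ha ω) (abs_nonneg _) (hb ω)
  have hubL2 : ∀ i, MemLp (ub i) 2 μ := fun i =>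
    (memℒp2_of_bdd_mul (measurable_const.sub (hfmeas i)) (hg_bd i) (huL2 i)).add
      (memℒp2_of_bdd_mul (hfmeas i) (hf_bd i) (hξL2 i))
  have hdef : d = fun ω => (∑ k, wo k * u ω k) + v ω := funext fun ω => by
    rw [hd ω]
    congr 1
    exact Finset.sum_congr rfl fun k _ => mul_comm _ _
  have hdL2 : MemLp d 2 μ := by
    rw [hdef]
    exact (memLp_finsetSum Finset.univ fun k _ => (huL2 k).const_mul (wo k)).add hvL2
  -- expectations of the Bernoulli variables
  have hfInt : ∀ j, Integrable (f j) μ := fun j =>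
    (integrable_const (1:ℝ)).mono' (hfmeas j).aestronglyMeasurable
      (Filter.Eventually.of_forall fun ω => by simpa [Real.norm_eq_abs] using hf_bd j ω)
  have hEf : ∀ j, ∫ ω, f j ω ∂μ = p := by
    intro j
    have hs : MeasurableSet {ω | f j ω = 1} := (hfmeas j) (measurableSet_singleton 1)
    have hpt : ∀ ω, f j ω = Set.indicator {ω | f j ω = 1} (fun _ => (1:ℝ)) ω := by
      intro ω; rcases hf01 j ω with h | h
      · rw [Set.indicator_of_notMem]
        · exact h
        · simp [Set.mem_setOf_eq, h]
      · rw [Set.indicator_of_mem]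
        · exact h
        · simpa [Set.mem_setOf_eq] using h
    calc ∫ ω, f j ω ∂μ = ∫ ω, Set.indicator {ω | f j ω = 1} (fun _ => (1:ℝ)) ω ∂μ :=
          integral_congr_ae (Filter.Eventually.of_forall hpt)
      _ = (μ {ω | f j ω = 1}).toReal • (1:ℝ) := integral_indicator_const _ hs
      _ = p := by rw [hfp j, ENNReal.toReal_ofReal hp0, smul_eq_mul, mul_one]
  have hEg : ∀ j, ∫ ω, (1 - f j ω) ∂μ = 1 - p := by
    intro j
    rw [integral_sub (integrable_const 1) (hfInt j), hEf j]
    simp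
  -- measurability of the independent family
  have hmiss_meas : ∀ k, Measurable (missFun M f u ξ k) := by
    intro k
    cases k with
    | F j => exact hfmeas j
    | U => exact humeas
    | Xi => exact hξmeas
  have hFU : ∀ i : Fin M, (MissIdx.F i : MissIdx M) ≠ .U := fun i h => by cases h
  have hFXi : ∀ i : Fin M, (MissIdx.F i : MissIdx M) ≠ .Xi := fun i h => by cases h
  have hUXi : (MissIdx.U : MissIdx M) ≠ .Xi := fun h => by cases h
  have hUF : ∀ i : Fin M, (MissIdx.U : MissIdx M) ≠ .F i := fun i h => by cases h
  have hXiF : ∀ i : Fin M, (MissIdx.Xi : MissIdx M) ≠ .F i := fun i h => by cases h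
  have hFF : ∀ {i j : Fin M}, i ≠ j → (MissIdx.F i : MissIdx M) ≠ .F j := by
    intro i j hij h
    exact hij (by injection h)
  -- basic second moments
  have hEuu : ∀ k l, ∫ ω, u ω k * u ω l ∂μ = Ru k l := fun k l => (hRu k l).symm
  have hEuξ : ∀ k l, ∫ ω, u ω k * ξ ω l ∂μ = 0 := by
    intro k l
    have hI : IndepFun (fun ω => u ω k) (fun ω => ξ ω l) μ :=
      (hindep.indepFun hUXi).comp (mev k) (mev l)
    calc ∫ ω, u ω k * ξ ω l ∂μ = (∫ ω, u ω k ∂μ) * ∫ ω, ξ ω l ∂μ :=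
          hI.integral_fun_mul_eq_mul_integral (hu_m k).aestronglyMeasurable (hξ_m l).aestronglyMeasurable
      _ = 0 := by rw [humean k, zero_mul]
  have hEξu : ∀ l k, ∫ ω, ξ ω l * u ω k ∂μ = 0 := by
    intro l k
    have hI : IndepFun (fun ω => ξ ω l) (fun ω => u ω k) μ :=
      ((hindep.indepFun hUXi).comp (mev k) (mev l)).symm
    calc ∫ ω, ξ ω l * u ω k ∂μ = (∫ ω, ξ ω l ∂μ) * ∫ ω, u ω k ∂μ :=
          hI.integral_fun_mul_eq_mul_integral (hξ_m l).aestronglyMeasurable (hu_m k).aestronglyMeasurable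
      _ = 0 := by rw [hξmean l, zero_mul]
  -- mixed moments with one Bernoulli factor
  have hgu : ∀ (i k l : Fin M), ∫ ω, (1 - f i ω) * (u ω k * u ω l) ∂μ = (1 - p) * Ru k l := by
    intro i k l
    have hI : IndepFun (fun ω => 1 - f i ω) (fun ω => u ω k * u ω l) μ :=
      (hindep.indepFun (hFU i)).comp msub (mevmul k l)
    calc ∫ ω, (1 - f i ω) * (u ω k * u ω l) ∂μ
        = (∫ ω, (1 - f i ω) ∂μ) * ∫ ω, u ω k * u ω l ∂μ :=
          hI.integral_fun_mul_eq_mul_integral (measurable_const.sub (hfmeas i)).aestronglyMeasurable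
            ((hu_m k).mul (hu_m l)).aestronglyMeasurable
      _ = (1 - p) * Ru k l := by rw [hEg i, hEuu k l]
  have hfξξ : ∀ (i k l : Fin M), ∫ ω, f i ω * (ξ ω k * ξ ω l) ∂μ =
      p * (if k = l then σξ ^ 2 else 0) := by
    intro i k l
    have hI : IndepFun (fun ω => f i ω) (fun ω => ξ ω k * ξ ω l) μ :=
      (hindep.indepFun (hFXi i)).comp mid (mevmul k l)
    calc ∫ ω, f i ω * (ξ ω k * ξ ω l) ∂μ
        = (∫ ω, f i ω ∂μ) * ∫ ω, ξ ω k * ξ ω l ∂μ :=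
          hI.integral_fun_mul_eq_mul_integral (hfmeas i).aestronglyMeasurable
            ((hξ_m k).mul (hξ_m l)).aestronglyMeasurable
      _ = p * (if k = l then σξ ^ 2 else 0) := by rw [hEf i, hξcov k l]
  have hfuξ : ∀ (i k l : Fin M), ∫ ω, f i ω * (u ω k * ξ ω l) ∂μ = 0 := by
    intro i k l
    have hI : IndepFun (fun ω => f i ω) (fun ω => u ω k * ξ ω l) μ :=
      ((hindep.indepFun_prodMk hmiss_meas .U .Xi (.F i) (hUF i) (hXiF i)).symm).comp
        mid (mevp k l)
    calc ∫ ω, f i ω * (u ω k * ξ ω l) ∂μ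
        = (∫ ω, f i ω ∂μ) * ∫ ω, u ω k * ξ ω l ∂μ :=
          hI.integral_fun_mul_eq_mul_integral (hfmeas i).aestronglyMeasurable
            ((hu_m k).mul (hξ_m l)).aestronglyMeasurable
      _ = 0 := by rw [hEuξ k l, mul_zero]
  -- off-diagonal four-factor moments
  have hgguu : ∀ (i j : Fin M), i ≠ j →
      ∫ ω, ((1 - f i ω) * (1 - f j ω)) * (u ω i * u ω j) ∂μ = (1 - p)^2 * Ru i j := by
    intro i j hij
    have hI : IndepFun (fun ω => (1 - f i ω) * (1 - f j ω)) (fun ω => u ω i * u ω j) μ :=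
      (hindep.indepFun_prodMk hmiss_meas (.F i) (.F j) .U (hFU i) (hFU j)).comp
        msubsub (mevmul i j)
    have hI2 : IndepFun (fun ω => 1 - f i ω) (fun ω => 1 - f j ω) μ :=
      (hindep.indepFun (hFF hij)).comp msub msub
    have h2 : ∫ ω, (1 - f i ω) * (1 - f j ω) ∂μ = (1 - p) * (1 - p) := by
      calc ∫ ω, (1 - f i ω) * (1 - f j ω) ∂μ
          = (∫ ω, (1 - f i ω) ∂μ) * ∫ ω, (1 - f j ω) ∂μ :=
            hI2.integral_fun_mul_eq_mul_integral (measurable_const.sub (hfmeas i)).aestronglyMeasurable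
              (measurable_const.sub (hfmeas j)).aestronglyMeasurable
        _ = (1 - p) * (1 - p) := by rw [hEg i, hEg j]
    calc ∫ ω, ((1 - f i ω) * (1 - f j ω)) * (u ω i * u ω j) ∂μ
        = (∫ ω, (1 - f i ω) * (1 - f j ω) ∂μ) * ∫ ω, u ω i * u ω j ∂μ :=
          hI.integral_fun_mul_eq_mul_integral
            (((measurable_const.sub (hfmeas i)).mul
              (measurable_const.sub (hfmeas j))).aestronglyMeasurable)
            ((hu_m i).mul (hu_m j)).aestronglyMeasurable
      _ = (1 - p)^2 * Ru i j := by rw [h2, hEuu i j]; ring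
  have hgfuξ : ∀ (i j : Fin M),
      ∫ ω, ((1 - f i ω) * f j ω) * (u ω i * ξ ω j) ∂μ = 0 := by
    intro i j
    have hI : IndepFun (fun ω => (1 - f i ω) * f j ω) (fun ω => u ω i * ξ ω j) μ :=
      (hindep.indepFun_prodMk_prodMk hmiss_meas (.F i) (.F j) .U .Xi
        (hFU i) (hFXi i) (hFU j) (hFXi j)).comp msubmul (mevp i j)
    calc ∫ ω, ((1 - f i ω) * f j ω) * (u ω i * ξ ω j) ∂μ
        = (∫ ω, (1 - f i ω) * f j ω ∂μ) * ∫ ω, u ω i * ξ ω j ∂μ :=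
          hI.integral_fun_mul_eq_mul_integral
            (((measurable_const.sub (hfmeas i)).mul (hfmeas j)).aestronglyMeasurable)
            ((hu_m i).mul (hξ_m j)).aestronglyMeasurable
      _ = 0 := by rw [hEuξ i j, mul_zero]
  have hfgξu : ∀ (i j : Fin M),
      ∫ ω, (f i ω * (1 - f j ω)) * (ξ ω i * u ω j) ∂μ = 0 := by
    intro i j
    have hI : IndepFun (fun ω => f i ω * (1 - f j ω)) (fun ω => ξ ω i * u ω j) μ :=
      (hindep.indepFun_prodMk_prodMk hmiss_meas (.F i) (.F j) .Xi .U
        (hFXi i) (hFU i) (hFXi j) (hFU j)).comp mmulsub (mevp i j)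
    calc ∫ ω, (f i ω * (1 - f j ω)) * (ξ ω i * u ω j) ∂μ
        = (∫ ω, f i ω * (1 - f j ω) ∂μ) * ∫ ω, ξ ω i * u ω j ∂μ :=
          hI.integral_fun_mul_eq_mul_integral
            (((hfmeas i).mul (measurable_const.sub (hfmeas j))).aestronglyMeasurable)
            ((hξ_m i).mul (hu_m j)).aestronglyMeasurable
      _ = 0 := by rw [hEξu i j, mul_zero]
  have hffξξ : ∀ (i j : Fin M), i ≠ j →
      ∫ ω, (f i ω * f j ω) * (ξ ω i * ξ ω j) ∂μ = 0 := by
    intro i j hij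
    have hI : IndepFun (fun ω => f i ω * f j ω) (fun ω => ξ ω i * ξ ω j) μ :=
      (hindep.indepFun_prodMk hmiss_meas (.F i) (.F j) .Xi (hFXi i) (hFXi j)).comp
        mmul2 (mevmul i j)
    calc ∫ ω, (f i ω * f j ω) * (ξ ω i * ξ ω j) ∂μ
        = (∫ ω, f i ω * f j ω ∂μ) * ∫ ω, ξ ω i * ξ ω j ∂μ :=
          hI.integral_fun_mul_eq_mul_integral (((hfmeas i).mul (hfmeas j)).aestronglyMeasurable)
            ((hξ_m i).mul (hξ_m j)).aestronglyMeasurable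
      _ = 0 := by rw [hξcov i j, if_neg hij, mul_zero]
  -- independence of v from the censored regressor
  have hvub : ∀ i, ∫ ω, v ω * ub i ω ∂μ = 0 := by
    intro i
    have hψ : Measurable
        (fun t : (Fin M → ℝ) × (Fin M → ℝ) × (Fin M → ℝ) =>
          (1 - t.2.1 i) * t.1 i + t.2.1 i * t.2.2 i) := by
      apply Measurable.add
      · exact (measurable_const.sub
          ((measurable_pi_apply i).comp (measurable_fst.comp measurable_snd))).mul
          ((measurable_pi_apply i).comp measurable_fst)
      · exact ((measurable_pi_apply i).comp (measurable_fst.comp measurable_snd)).mul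
          ((measurable_pi_apply i).comp (measurable_snd.comp measurable_snd))
    have hI : IndepFun (ub i) v μ := hvindep.comp hψ measurable_id
    calc ∫ ω, v ω * ub i ω ∂μ = (∫ ω, v ω ∂μ) * ∫ ω, ub i ω ∂μ :=
          hI.symm.integral_fun_mul_eq_mul_integral hvmeas.aestronglyMeasurable
            (hub_m i).aestronglyMeasurable
      _ = 0 := by rw [hvmean, zero_mul]
  -- second moments of the censored regressor
  have hAdiag : ∀ i, ∫ ω, ub i ω * ub i ω ∂μ = (1 - p) * Ru i i + p * σξ ^ 2 := by
    intro i
    have hpt : ∀ ω, ub i ω * ub i ω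
        = (1 - f i ω) * (u ω i * u ω i) + f i ω * (ξ ω i * ξ ω i) := by
      intro ω; rcases hf01 i ω with h | h <;> simp [hub_def, h] <;> ring
    have I1 : Integrable (fun ω => (1 - f i ω) * (u ω i * u ω i)) μ :=
      bdd_mul_integrable (measurable_const.sub (hfmeas i)) (hg_bd i)
        (l2_mul_integrable (huL2 i) (huL2 i))
    have I2 : Integrable (fun ω => f i ω * (ξ ω i * ξ ω i)) μ :=
      bdd_mul_integrable (hfmeas i) (hf_bd i) (l2_mul_integrable (hξL2 i) (hξL2 i))
    calc ∫ ω, ub i ω * ub i ω ∂μ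
        = ∫ ω, ((1 - f i ω) * (u ω i * u ω i) + f i ω * (ξ ω i * ξ ω i)) ∂μ :=
          integral_congr_ae (Filter.Eventually.of_forall hpt)
      _ = (∫ ω, (1 - f i ω) * (u ω i * u ω i) ∂μ) + ∫ ω, f i ω * (ξ ω i * ξ ω i) ∂μ :=
          integral_add I1 I2
      _ = (1 - p) * Ru i i + p * σξ ^ 2 := by rw [hgu i i i, hfξξ i i i, if_pos rfl]
  have hAoff : ∀ i j, i ≠ j → ∫ ω, ub i ω * ub j ω ∂μ = (1 - p)^2 * Ru i j := by
    intro i j hij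
    have hpt : ∀ ω, ub i ω * ub j ω
        = ((1 - f i ω) * (1 - f j ω)) * (u ω i * u ω j)
          + (((1 - f i ω) * f j ω) * (u ω i * ξ ω j)
          + ((f i ω * (1 - f j ω)) * (ξ ω i * u ω j)
          + (f i ω * f j ω) * (ξ ω i * ξ ω j))) := by
      intro ω; simp only [hub_def]; ring
    have I1 : Integrable (fun ω => ((1 - f i ω) * (1 - f j ω)) * (u ω i * u ω j)) μ :=
      bdd_mul_integrable ((measurable_const.sub (hfmeas i)).mul
          (measurable_const.sub (hfmeas j)))
        (hgf_bd _ _ (hg_bd i) (hg_bd j)) (l2_mul_integrable (huL2 i) (huL2 j))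
    have I2 : Integrable (fun ω => ((1 - f i ω) * f j ω) * (u ω i * ξ ω j)) μ :=
      bdd_mul_integrable ((measurable_const.sub (hfmeas i)).mul (hfmeas j))
        (hgf_bd _ _ (hg_bd i) (hf_bd j)) (l2_mul_integrable (huL2 i) (hξL2 j))
    have I3 : Integrable (fun ω => (f i ω * (1 - f j ω)) * (ξ ω i * u ω j)) μ :=
      bdd_mul_integrable ((hfmeas i).mul (measurable_const.sub (hfmeas j)))
        (hgf_bd _ _ (hf_bd i) (hg_bd j)) (l2_mul_integrable (hξL2 i) (huL2 j))
    have I4 : Integrable (fun ω => (f i ω * f j ω) * (ξ ω i * ξ ω j)) μ :=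
      bdd_mul_integrable ((hfmeas i).mul (hfmeas j))
        (hgf_bd _ _ (hf_bd i) (hf_bd j)) (l2_mul_integrable (hξL2 i) (hξL2 j))
    have I34 : Integrable (fun ω => (f i ω * (1 - f j ω)) * (ξ ω i * u ω j)
        + (f i ω * f j ω) * (ξ ω i * ξ ω j)) μ := I3.add I4
    have I234 : Integrable (fun ω => ((1 - f i ω) * f j ω) * (u ω i * ξ ω j)
        + ((f i ω * (1 - f j ω)) * (ξ ω i * u ω j)
          + (f i ω * f j ω) * (ξ ω i * ξ ω j))) μ := I2.add I34
    have e34 : ∫ ω, ((f i ω * (1 - f j ω)) * (ξ ω i * u ω j)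
        + (f i ω * f j ω) * (ξ ω i * ξ ω j)) ∂μ
        = (∫ ω, (f i ω * (1 - f j ω)) * (ξ ω i * u ω j) ∂μ)
          + ∫ ω, (f i ω * f j ω) * (ξ ω i * ξ ω j) ∂μ := integral_add I3 I4
    have e234 : ∫ ω, (((1 - f i ω) * f j ω) * (u ω i * ξ ω j)
        + ((f i ω * (1 - f j ω)) * (ξ ω i * u ω j)
          + (f i ω * f j ω) * (ξ ω i * ξ ω j))) ∂μ
        = (∫ ω, ((1 - f i ω) * f j ω) * (u ω i * ξ ω j) ∂μ)
          + ∫ ω, ((f i ω * (1 - f j ω)) * (ξ ω i * u ω j)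
            + (f i ω * f j ω) * (ξ ω i * ξ ω j)) ∂μ := integral_add I2 I34
    calc ∫ ω, ub i ω * ub j ω ∂μ
        = ∫ ω, (((1 - f i ω) * (1 - f j ω)) * (u ω i * u ω j)
          + (((1 - f i ω) * f j ω) * (u ω i * ξ ω j)
          + ((f i ω * (1 - f j ω)) * (ξ ω i * u ω j)
          + (f i ω * f j ω) * (ξ ω i * ξ ω j)))) ∂μ :=
          integral_congr_ae (Filter.Eventually.of_forall hpt)
      _ = (∫ ω, ((1 - f i ω) * (1 - f j ω)) * (u ω i * u ω j) ∂μ)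
          + ∫ ω, (((1 - f i ω) * f j ω) * (u ω i * ξ ω j)
          + ((f i ω * (1 - f j ω)) * (ξ ω i * u ω j)
          + (f i ω * f j ω) * (ξ ω i * ξ ω j))) ∂μ := integral_add I1 I234
      _ = (1 - p)^2 * Ru i j := by
          rw [e234, e34, hgguu i j hij, hgfuξ i j, hfgξu i j, hffξξ i j hij]; ring
  -- first moment against d
  have hb : ∀ i, ∫ ω, d ω * ub i ω ∂μ = (1 - p) * ∑ k, wo k * Ru k i := by
    intro i
    have hpt : ∀ ω, d ω * ub i ω
        = (∑ k, (wo k * ((1 - f i ω) * (u ω k * u ω i))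
            + wo k * (f i ω * (u ω k * ξ ω i)))) + v ω * ub i ω := by
      intro ω
      rw [hdef]
      simp only [hub_def]
      rw [add_mul, Finset.sum_mul]
      congr 1
      refine Finset.sum_congr rfl fun k _ => ?_
      ring
    have Ik : ∀ k : Fin M, Integrable (fun ω =>
        wo k * ((1 - f i ω) * (u ω k * u ω i)) + wo k * (f i ω * (u ω k * ξ ω i))) μ := by
      intro k
      exact ((bdd_mul_integrable (measurable_const.sub (hfmeas i)) (hg_bd i)
        (l2_mul_integrable (huL2 k) (huL2 i))).const_mul (wo k)).add
        ((bdd_mul_integrable (hfmeas i) (hf_bd i)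
          (l2_mul_integrable (huL2 k) (hξL2 i))).const_mul (wo k))
    have Isum : Integrable (fun ω => ∑ k, (wo k * ((1 - f i ω) * (u ω k * u ω i))
        + wo k * (f i ω * (u ω k * ξ ω i)))) μ := integrable_finset_sum _ fun k _ => Ik k
    have Iv : Integrable (fun ω => v ω * ub i ω) μ := l2_mul_integrable hvL2 (hubL2 i)
    calc ∫ ω, d ω * ub i ω ∂μ
        = ∫ ω, ((∑ k, (wo k * ((1 - f i ω) * (u ω k * u ω i))
            + wo k * (f i ω * (u ω k * ξ ω i)))) + v ω * ub i ω) ∂μ :=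
          integral_congr_ae (Filter.Eventually.of_forall hpt)
      _ = (∫ ω, ∑ k, (wo k * ((1 - f i ω) * (u ω k * u ω i))
            + wo k * (f i ω * (u ω k * ξ ω i))) ∂μ) + ∫ ω, v ω * ub i ω ∂μ :=
          integral_add Isum Iv
      _ = (∑ k, ∫ ω, (wo k * ((1 - f i ω) * (u ω k * u ω i))
            + wo k * (f i ω * (u ω k * ξ ω i))) ∂μ) + 0 := by
          rw [integral_finset_sum _ fun k _ => Ik k, hvub i]
      _ = ∑ k, wo k * ((1 - p) * Ru k i) := by
          rw [add_zero]
          refine Finset.sum_congr rfl fun k _ => ?_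
          rw [integral_add ((bdd_mul_integrable (c := fun ω => 1 - f i ω) (measurable_const.sub (hfmeas i)) (hg_bd i)
              (l2_mul_integrable (huL2 k) (huL2 i))).const_mul (wo k))
            ((bdd_mul_integrable (hfmeas i) (hf_bd i)
              (l2_mul_integrable (huL2 k) (hξL2 i))).const_mul (wo k)),
            integral_const_mul, integral_const_mul, hgu i k i, hfuξ i k i]
          ring
      _ = (1 - p) * ∑ k, wo k * Ru k i := by
          rw [Finset.mul_sum]
          exact Finset.sum_congr rfl fun k _ => by ring
  -- the master expansion of the least-mean-squares cost
  have hmain : ∀ w : Fin M → ℝ, ∫ ω, (d ω - censReg M f u ξ ω ⬝ᵥ w) ^ 2 ∂μ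
      = (∫ ω, d ω ^ 2 ∂μ)
        - 2 * ∑ i, w i * ((1 - p) * ∑ k, wo k * Ru k i)
        + ∑ i, ∑ j, (w i * w j) * ∫ ω, ub i ω * ub j ω ∂μ := by
    intro w
    set s : Ω → ℝ := fun ω => ∑ i, w i * ub i ω with hs_def
    have hsval : ∀ ω, censReg M f u ξ ω ⬝ᵥ w = s ω := by
      intro ω
      simp only [dotProduct, hcrE, hs_def]
      exact Finset.sum_congr rfl fun i _ => mul_comm _ _
    have hsL2 : MemLp s 2 μ := by
      rw [hs_def]
      exact memLp_finsetSum Finset.univ fun i _ => (hubL2 i).const_mul (w i)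
    have hd2 : Integrable (fun ω => d ω ^ 2) μ := hdL2.integrable_sq
    have hds : Integrable (fun ω => d ω * s ω) μ := l2_mul_integrable hdL2 hsL2
    have hds2 : Integrable (fun ω => 2 * (d ω * s ω)) μ := hds.const_mul 2
    have hs2 : Integrable (fun ω => s ω * s ω) μ := l2_mul_integrable hsL2 hsL2
    have hpt : ∀ ω, (d ω - censReg M f u ξ ω ⬝ᵥ w) ^ 2
        = (d ω ^ 2 - 2 * (d ω * s ω)) + s ω * s ω := by
      intro ω; rw [hsval ω]; ring
    have hdsint : ∫ ω, d ω * s ω ∂μ = ∑ i, w i * ((1 - p) * ∑ k, wo k * Ru k i) := by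
      have hpt2 : ∀ ω, d ω * s ω = ∑ i, w i * (d ω * ub i ω) := by
        intro ω
        rw [hs_def, Finset.mul_sum]
        exact Finset.sum_congr rfl fun i _ => by ring
      calc ∫ ω, d ω * s ω ∂μ = ∫ ω, ∑ i, w i * (d ω * ub i ω) ∂μ :=
            integral_congr_ae (Filter.Eventually.of_forall hpt2)
        _ = ∑ i, ∫ ω, w i * (d ω * ub i ω) ∂μ :=
            integral_finset_sum _ fun i _ =>
              (l2_mul_integrable hdL2 (hubL2 i)).const_mul (w i)
        _ = ∑ i, w i * ((1 - p) * ∑ k, wo k * Ru k i) := by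
            refine Finset.sum_congr rfl fun i _ => ?_
            rw [integral_const_mul, hb i]
    have hssint : ∫ ω, s ω * s ω ∂μ
        = ∑ i, ∑ j, (w i * w j) * ∫ ω, ub i ω * ub j ω ∂μ := by
      have hpt2 : ∀ ω, s ω * s ω = ∑ i, ∑ j, (w i * w j) * (ub i ω * ub j ω) := by
        intro ω
        rw [hs_def, Finset.sum_mul_sum]
        exact Finset.sum_congr rfl fun i _ => Finset.sum_congr rfl fun j _ => by ring
      calc ∫ ω, s ω * s ω ∂μ = ∫ ω, ∑ i, ∑ j, (w i * w j) * (ub i ω * ub j ω) ∂μ :=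
            integral_congr_ae (Filter.Eventually.of_forall hpt2)
        _ = ∑ i, ∫ ω, ∑ j, (w i * w j) * (ub i ω * ub j ω) ∂μ :=
            integral_finset_sum _ fun i _ => integrable_finset_sum _ fun j _ =>
              (l2_mul_integrable (hubL2 i) (hubL2 j)).const_mul (w i * w j)
        _ = ∑ i, ∑ j, ∫ ω, (w i * w j) * (ub i ω * ub j ω) ∂μ :=
            Finset.sum_congr rfl fun i _ => integral_finset_sum _ fun j _ =>
              (l2_mul_integrable (hubL2 i) (hubL2 j)).const_mul (w i * w j)
        _ = ∑ i, ∑ j, (w i * w j) * ∫ ω, ub i ω * ub j ω ∂μ :=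
            Finset.sum_congr rfl fun i _ => Finset.sum_congr rfl fun j _ =>
              integral_const_mul _ _
    have esub : ∫ ω, (d ω ^ 2 - 2 * (d ω * s ω)) ∂μ
        = (∫ ω, d ω ^ 2 ∂μ) - ∫ ω, 2 * (d ω * s ω) ∂μ := integral_sub hd2 hds2
    calc ∫ ω, (d ω - censReg M f u ξ ω ⬝ᵥ w) ^ 2 ∂μ
        = ∫ ω, ((d ω ^ 2 - 2 * (d ω * s ω)) + s ω * s ω) ∂μ :=
          integral_congr_ae (Filter.Eventually.of_forall hpt)
      _ = (∫ ω, (d ω ^ 2 - 2 * (d ω * s ω)) ∂μ) + ∫ ω, s ω * s ω ∂μ :=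
          integral_add (hd2.sub hds2) hs2
      _ = (∫ ω, d ω ^ 2 ∂μ)
          - 2 * ∑ i, w i * ((1 - p) * ∑ k, wo k * Ru k i)
          + ∑ i, ∑ j, (w i * w j) * ∫ ω, ub i ω * ub j ω ∂μ := by
          rw [esub, integral_const_mul, hdsint, hssint]
  -- symmetry of Ru
  have hRus : ∀ i j, Ru i j = Ru j i := by
    intro i j
    rw [hRu i j, hRu j i]
    exact integral_congr_ae (Filter.Eventually.of_forall fun ω => mul_comm _ _)
  -- the bilinear form
  set Bl : (Fin M → ℝ) → (Fin M → ℝ) → ℝ :=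
    fun x y => ∑ i, ∑ j, x i * y j * Ru i j with hBl_def
  have hdot : ∀ x y : Fin M → ℝ, x ⬝ᵥ (Ru *ᵥ y) = Bl x y := by
    intro x y
    simp only [hBl_def, dotProduct, Matrix.mulVec]
    refine Finset.sum_congr rfl fun i _ => ?_
    rw [Finset.mul_sum]
    exact Finset.sum_congr rfl fun j _ => by ring
  have hdotT : ∀ x : Fin M → ℝ, x ⬝ᵥ (T *ᵥ x) = ∑ i, ∑ j, x i * x j * T i j := by
    intro x
    simp only [dotProduct, Matrix.mulVec]
    refine Finset.sum_congr rfl fun i _ => ?_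
    rw [Finset.mul_sum]
    exact Finset.sum_congr rfl fun j _ => by ring
  have hBl_symm : ∀ x y, Bl x y = Bl y x := by
    intro x y
    simp only [hBl_def]
    rw [Finset.sum_comm]
    exact Finset.sum_congr rfl fun j _ => Finset.sum_congr rfl fun i _ => by
      rw [hRus i j]; ring
  have hBl_pos : ∀ z : Fin M → ℝ, z ≠ 0 → 0 < Bl z z := by
    intro z hz
    have h := hRuPD.dotProduct_mulVec_pos hz
    have hstar : star z = z := funext fun i => star_trivial _
    rw [hstar, hdot z z] at h
    exact h
  -- entrywise relation between the second moments and T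
  have hATterm : ∀ i j, (∫ ω, ub i ω * ub j ω ∂μ) - T i j = (1 - p) * Ru i j := by
    intro i j
    by_cases hij : i = j
    · subst hij
      rw [hAdiag i, hT]
      simp only [Rr, Pone, onesMat, Matrix.add_apply, Matrix.smul_apply, Matrix.neg_apply,
        Matrix.hadamard_apply, Matrix.sub_apply, Matrix.one_apply_eq, Matrix.of_apply,
        smul_eq_mul]
      ring
    · rw [hAoff i j hij, hT]
      simp only [Rr, Pone, onesMat, Matrix.add_apply, Matrix.smul_apply, Matrix.neg_apply,
        Matrix.hadamard_apply, Matrix.sub_apply, Matrix.one_apply_ne hij, Matrix.of_apply,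
        smul_eq_mul]
      ring
  have hquad : ∀ x : Fin M → ℝ,
      (∑ i, ∑ j, (x i * x j) * ∫ ω, ub i ω * ub j ω ∂μ) - x ⬝ᵥ (T *ᵥ x)
        = (1 - p) * Bl x x := by
    intro x
    rw [hdotT x]
    simp only [hBl_def]
    rw [Finset.mul_sum, ← Finset.sum_sub_distrib]
    refine Finset.sum_congr rfl fun i _ => ?_
    rw [Finset.mul_sum, ← Finset.sum_sub_distrib]
    refine Finset.sum_congr rfl fun j _ => ?_
    linear_combination (x i * x j) * hATterm i j
  have hcross : ∀ x : Fin M → ℝ,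
      ∑ i, x i * ((1 - p) * ∑ k, wo k * Ru k i) = (1 - p) * Bl wo x := by
    intro x
    calc ∑ i, x i * ((1 - p) * ∑ k, wo k * Ru k i)
        = ∑ i, ∑ k, (1 - p) * (wo k * x i * Ru k i) := by
          refine Finset.sum_congr rfl fun i _ => ?_
          rw [Finset.mul_sum, Finset.mul_sum]
          exact Finset.sum_congr rfl fun k _ => by ring
      _ = ∑ k, ∑ i, (1 - p) * (wo k * x i * Ru k i) := Finset.sum_comm
      _ = (1 - p) * Bl wo x := by
          simp only [hBl_def]
          rw [Finset.mul_sum]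
          refine Finset.sum_congr rfl fun k _ => ?_
          rw [Finset.mul_sum]
  -- the closed form of the de-regularized cost
  have hJfinal : ∀ x : Fin M → ℝ, J' x = (∫ ω, d ω ^ 2 ∂μ)
      - 2 * ((1 - p) * Bl wo x) + (1 - p) * Bl x x := by
    intro x
    have h1 := hJ' x
    have h2 := hmain x
    have h3 := hquad x
    have h4 := hcross x
    rw [h1, h2]
    linarith
  -- expansion of Bl on differences
  have hBlsub : ∀ x y : Fin M → ℝ,
      Bl (x - y) (x - y) = Bl x x - Bl x y - Bl y x + Bl y y := by
    intro x y
    simp only [hBl_def, Pi.sub_apply]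
    calc ∑ i, ∑ j, (x i - y i) * (x j - y j) * Ru i j
        = ∑ i, ∑ j, (x i * x j * Ru i j - x i * y j * Ru i j
            - y i * x j * Ru i j + y i * y j * Ru i j) :=
          Finset.sum_congr rfl fun i _ => Finset.sum_congr rfl fun j _ => by ring
      _ = ∑ i, ∑ j, x i * x j * Ru i j - ∑ i, ∑ j, x i * y j * Ru i j
          - ∑ i, ∑ j, y i * x j * Ru i j + ∑ i, ∑ j, y i * y j * Ru i j := by
          simp only [Finset.sum_add_distrib, Finset.sum_sub_distrib]
  -- bilinearity
  have hBl_right : ∀ (a b : ℝ) (x y z : Fin M → ℝ),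
      Bl z (a • x + b • y) = a * Bl z x + b * Bl z y := by
    intro a b x y z
    simp only [hBl_def, Pi.add_apply, Pi.smul_apply, smul_eq_mul]
    rw [Finset.mul_sum, Finset.mul_sum, ← Finset.sum_add_distrib]
    refine Finset.sum_congr rfl fun i _ => ?_
    rw [Finset.mul_sum, Finset.mul_sum, ← Finset.sum_add_distrib]
    exact Finset.sum_congr rfl fun j _ => by ring
  have hBl_left : ∀ (a b : ℝ) (x y z : Fin M → ℝ),
      Bl (a • x + b • y) z = a * Bl x z + b * Bl y z := by
    intro a b x y z
    rw [hBl_symm (a • x + b • y) z, hBl_right a b x y z, hBl_symm z x, hBl_symm z y]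
  -- Part 1
  have part1 : ∀ w : Fin M → ℝ,
      J' w - J' wo = (1 - p) * ((w - wo) ⬝ᵥ (Ru *ᵥ (w - wo))) := by
    intro w
    rw [hJfinal w, hJfinal wo, hdot (w - wo) (w - wo)]
    linear_combination (1 - p) * hBl_symm w wo - (1 - p) * hBlsub w wo
  -- Part 2
  have part2 : StrictConvexOn ℝ Set.univ J' := by
    refine ⟨convex_univ, ?_⟩
    intro x _ y _ hxy a b ha hb hab
    have hbeq : b = 1 - a := by linarith
    subst hbeq
    have hkey : 0 < Bl (x - y) (x - y) := hBl_pos _ (sub_ne_zero.mpr hxy)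
    have e1 : Bl wo (a • x + (1 - a) • y) = a * Bl wo x + (1 - a) * Bl wo y :=
      hBl_right _ _ _ _ _
    have e2 : Bl (a • x + (1 - a) • y) (a • x + (1 - a) • y)
        = a * (a * Bl x x + (1 - a) * Bl x y) + (1 - a) * (a * Bl y x + (1 - a) * Bl y y) := by
      rw [hBl_left a (1 - a) x y _, hBl_right a (1 - a) x y x, hBl_right a (1 - a) x y y]
    have e3 := hBlsub x y
    have hdiff : a * J' x + (1 - a) * J' y - J' (a • x + (1 - a) • y)
        = (1 - p) * (a * ((1 - a) * Bl (x - y) (x - y))) := by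
      rw [hJfinal x, hJfinal y, hJfinal (a • x + (1 - a) • y), e1, e2]
      linear_combination (-((1 - p) * a * (1 - a))) * e3
    have hpos : 0 < (1 - p) * (a * ((1 - a) * Bl (x - y) (x - y))) :=
      mul_pos hq0 (mul_pos ha (mul_pos hb hkey))
    have : J' (a • x + (1 - a) • y) < a * J' x + (1 - a) * J' y := by linarith
    simpa [smul_eq_mul] using this
  -- Part 3
  refine ⟨part1, part2, fun w hw => ?_⟩
  have h1 := part1 w
  have h2 : 0 < (1 - p) * ((w - wo) ⬝ᵥ (Ru *ᵥ (w - wo))) := by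
    rw [hdot]
    exact mul_pos hq0 (hBl_pos _ (sub_ne_zero.mpr hw))
  linarith
end

section
/- If the covariance matrix R_u is diagonal, then E[((u − ξ)ᵀ F wᵒ)²] = p (wᵒ)ᵀ R_u wᵒ + p σ_ξ² ‖wᵒ‖², and consequently the noise variance can be expressed as σ_v² = E[(d − ūᵀ wᵒ)²] − p (wᵒ)ᵀ R_u wᵒ − p σ_ξ² ‖wᵒ‖². -/
open MeasureTheory ProbabilityTheory Matrix
open scoped Matrix

lemma l2_mul_integrable_s10 {Ω : Type*} [MeasurableSpace Ω] {μ : Measure Ω}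
    {f g : Ω → ℝ} (hf : MemLp f 2 μ) (hg : MemLp g 2 μ) :
    Integrable (fun ω => f ω * g ω) μ := by
  have h1 := (hf.add hg).integrable_sq
  have h2 := hf.integrable_sq
  have h3 := hg.integrable_sq
  have heq : (fun ω => f ω * g ω)
      = fun ω => ((f + g) ω ^ 2 - f ω ^ 2 - g ω ^ 2) / 2 := by
    funext ω; simp only [Pi.add_apply]; ring
  rw [heq]
  exact ((h1.sub h2).sub h3).div_const 2


/-- if `R_u` is diagonal then `E[((u − ξ)ᵀ F wᵒ)²] = p (wᵒ)ᵀ R_u wᵒ +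
p σ_ξ² ‖wᵒ‖²`, and consequently
`σ_v² = E[(d − ūᵀ wᵒ)²] − p (wᵒ)ᵀ R_u wᵒ − p σ_ξ² ‖wᵒ‖²`. -/
theorem noise_variance_expression_diagonal
    {Ω : Type*} [MeasurableSpace Ω] (μ : Measure Ω) [IsProbabilityMeasure μ]
    (M : ℕ) (p : ℝ) (hp0 : 0 ≤ p) (hp1 : p < 1) (σξ : ℝ) (hσξ : 0 ≤ σξ)
    (u ξ : Ω → Fin M → ℝ) (f : Fin M → Ω → ℝ)
    (humeas : Measurable u) (hξmeas : Measurable ξ) (hfmeas : ∀ j, Measurable (f j))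
    (huL2 : ∀ i, MemLp (fun ω => u ω i) 2 μ) (hξL2 : ∀ i, MemLp (fun ω => ξ ω i) 2 μ)
    (humean : ∀ i, ∫ ω, u ω i ∂μ = 0) (hξmean : ∀ i, ∫ ω, ξ ω i ∂μ = 0)
    (Ru : Matrix (Fin M) (Fin M) ℝ)
    (hRu : ∀ i j, Ru i j = ∫ ω, u ω i * u ω j ∂μ)
    (hRudiag : Ru.IsDiag)
    (hξcov : ∀ i j, ∫ ω, ξ ω i * ξ ω j ∂μ = if i = j then σξ ^ 2 else 0)
    (hf01 : ∀ j ω, f j ω = 0 ∨ f j ω = 1)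
    (hfp : ∀ j, μ {ω | f j ω = 1} = ENNReal.ofReal p)
    (hindep : iIndepFun (missFun M f u ξ) μ)
    (wo : Fin M → ℝ) (v : Ω → ℝ) (σv : ℝ)
    (hvmeas : Measurable v) (hvL2 : MemLp v 2 μ)
    (hvmean : ∫ ω, v ω ∂μ = 0) (hvvar : ∫ ω, (v ω) ^ 2 ∂μ = σv ^ 2)
    (hvindep : IndepFun (fun ω => (u ω, (fun j => f j ω), ξ ω)) v μ)
    (d : Ω → ℝ) (hd : ∀ ω, d ω = u ω ⬝ᵥ wo + v ω) :
    (∫ ω, ((u ω - ξ ω) ⬝ᵥ (Matrix.diagonal (fun k => f k ω) *ᵥ wo)) ^ 2 ∂μ)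
        = p * (wo ⬝ᵥ (Ru *ᵥ wo)) + p * σξ ^ 2 * (∑ j, wo j ^ 2)
    ∧ σv ^ 2 = (∫ ω, (d ω - censReg M f u ξ ω ⬝ᵥ wo) ^ 2 ∂μ)
        - p * (wo ⬝ᵥ (Ru *ᵥ wo)) - p * σξ ^ 2 * (∑ j, wo j ^ 2) := by
  classical
  have hmm : ∀ i, Measurable (missFun M f u ξ i) := by
    intro i
    cases i with
    | F j => exact hfmeas j
    | U => exact humeas
    | Xi => exact hξmeas
  set h : Fin M → Ω → ℝ := fun j ω => u ω j - ξ ω j with hhdef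
  have hhL2 : ∀ j, MemLp (h j) 2 μ := fun j => (huL2 j).sub (hξL2 j)
  have hhmeas : ∀ j, Measurable (h j) :=
    fun j => (humeas.eval).sub (hξmeas.eval)
  -- E[f j] = p
  have hEf : ∀ j, ∫ ω, f j ω ∂μ = p := by
    intro j
    have hset : MeasurableSet {ω | f j ω = 1} := (hfmeas j) (measurableSet_singleton 1)
    have hind : (fun ω => f j ω) = Set.indicator {ω | f j ω = 1} (fun _ => (1:ℝ)) := by
      funext ω
      rcases hf01 j ω with h0 | h0
      · simp [Set.indicator_apply, Set.mem_setOf_eq, h0]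
      · simp [Set.indicator_apply, Set.mem_setOf_eq, h0]
    rw [hind, integral_indicator_const _ hset, measureReal_def, hfp j]
    simp [ENNReal.toReal_ofReal hp0]
  -- E[h j * h k]
  have hhcov : ∀ j k, ∫ ω, h j ω * h k ω ∂μ
      = Ru j k + (if j = k then σξ ^ 2 else 0) := by
    intro j k
    have hiu : Integrable (fun ω => u ω j * u ω k) μ := l2_mul_integrable_s10 (huL2 j) (huL2 k)
    have hiuξ : Integrable (fun ω => u ω j * ξ ω k) μ := l2_mul_integrable_s10 (huL2 j) (hξL2 k)
    have hiξu : Integrable (fun ω => ξ ω j * u ω k) μ := l2_mul_integrable_s10 (hξL2 j) (huL2 k)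
    have hiξ : Integrable (fun ω => ξ ω j * ξ ω k) μ := l2_mul_integrable_s10 (hξL2 j) (hξL2 k)
    have hindUXi : IndepFun u ξ μ := hindep.indepFun (i := MissIdx.U) (j := MissIdx.Xi) nofun
    have hcr1 : ∫ ω, u ω j * ξ ω k ∂μ = 0 := by
      have hI : IndepFun (fun ω => u ω j) (fun ω => ξ ω k) μ :=
        hindUXi.comp (measurable_pi_apply j) (measurable_pi_apply k)
      rw [hI.integral_fun_mul_eq_mul_integral (humeas.eval).aestronglyMeasurable (hξmeas.eval).aestronglyMeasurable,
        humean j, hξmean k, mul_zero]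
    have hcr2 : ∫ ω, ξ ω j * u ω k ∂μ = 0 := by
      have hI : IndepFun (fun ω => ξ ω j) (fun ω => u ω k) μ :=
        (hindUXi.symm).comp (measurable_pi_apply j) (measurable_pi_apply k)
      rw [hI.integral_fun_mul_eq_mul_integral (hξmeas.eval).aestronglyMeasurable (humeas.eval).aestronglyMeasurable,
        hξmean j, humean k, mul_zero]
    have hexp : (fun ω => h j ω * h k ω) = fun ω =>
        u ω j * u ω k - u ω j * ξ ω k - ξ ω j * u ω k + ξ ω j * ξ ω k := by
      funext ω; simp only [hhdef]; ring
    have hiA : Integrable (fun ω => u ω j * u ω k - u ω j * ξ ω k - ξ ω j * u ω k) μ := by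
      exact (hiu.sub hiuξ).sub hiξu
    have hiB : Integrable (fun ω => u ω j * u ω k - u ω j * ξ ω k) μ := by
      exact hiu.sub hiuξ
    rw [hexp, integral_add hiA hiξ, integral_sub hiB hiξu, integral_sub hiu hiuξ,
      hcr1, hcr2, hξcov j k, ← hRu j k]
    ring
  -- the pair (f j, f k) is independent of (u, ξ)
  have hEff : ∀ j k : Fin M, ∫ ω, (f j ω * f k ω) * (h j ω * h k ω) ∂μ
      = (∫ ω, f j ω * f k ω ∂μ) * (∫ ω, h j ω * h k ω ∂μ) := by
    intro j k
    have hI : IndepFun (fun ω => (f j ω, f k ω)) (fun ω => (u ω, ξ ω)) μ :=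
      hindep.indepFun_prodMk_prodMk hmm (.F j) (.F k) .U .Xi nofun nofun nofun nofun
    have hI2 : IndepFun (fun ω => f j ω * f k ω) (fun ω => h j ω * h k ω) μ := by
      have := hI.comp (φ := fun q : ℝ × ℝ => q.1 * q.2)
        (ψ := fun q : (Fin M → ℝ) × (Fin M → ℝ) => (q.1 j - q.2 j) * (q.1 k - q.2 k))
        (by fun_prop) (by fun_prop)
      exact this
    exact hI2.integral_fun_mul_eq_mul_integral ((hfmeas j).mul (hfmeas k)).aestronglyMeasurable
      ((hhmeas j).mul (hhmeas k)).aestronglyMeasurable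
  -- per-term expectation
  have hEterm : ∀ j k : Fin M, ∫ ω, (f j ω * f k ω) * (h j ω * h k ω) ∂μ
      = if j = k then p * (Ru j j + σξ ^ 2) else 0 := by
    intro j k
    rw [hEff j k, hhcov j k]
    by_cases hjk : j = k
    · subst hjk
      have hsq : (fun ω => f j ω * f j ω) = fun ω => f j ω := by
        funext ω; rcases hf01 j ω with h0 | h0 <;> simp [h0]
      rw [hsq, hEf j]
      simp
    · rw [if_neg hjk, if_neg hjk, hRudiag hjk]
      ring
  -- integrability of each term
  have hterm_int : ∀ j k : Fin M,
      Integrable (fun ω => (f j ω * f k ω) * (h j ω * h k ω)) μ := by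
    intro j k
    refine (l2_mul_integrable_s10 (hhL2 j) (hhL2 k)).bdd_mul (c := 1)
      ((hfmeas j).mul (hfmeas k)).aestronglyMeasurable (Filter.Eventually.of_forall fun ω => ?_)
    rcases hf01 j ω with h0 | h0 <;> rcases hf01 k ω with h1 | h1 <;> simp [h0, h1]
  -- pointwise expansion of the square
  have hg_eq : ∀ ω, (u ω - ξ ω) ⬝ᵥ (Matrix.diagonal (fun k => f k ω) *ᵥ wo)
      = ∑ j, f j ω * h j ω * wo j := by
    intro ω
    simp only [dotProduct, Matrix.mulVec_diagonal, Pi.sub_apply, hhdef]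
    exact Finset.sum_congr rfl fun i _ => by ring
  have hsq_exp : ∀ ω, ((u ω - ξ ω) ⬝ᵥ (Matrix.diagonal (fun k => f k ω) *ᵥ wo)) ^ 2
      = ∑ j, ∑ k, (wo j * wo k) * ((f j ω * f k ω) * (h j ω * h k ω)) := by
    intro ω
    rw [hg_eq ω, sq, Finset.sum_mul_sum]
    exact Finset.sum_congr rfl fun j _ => Finset.sum_congr rfl fun k _ => by ring
  -- integral of the square
  have hgsq_int : Integrable
      (fun ω => ((u ω - ξ ω) ⬝ᵥ (Matrix.diagonal (fun k => f k ω) *ᵥ wo)) ^ 2) μ := by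
    have : (fun ω => ((u ω - ξ ω) ⬝ᵥ (Matrix.diagonal (fun k => f k ω) *ᵥ wo)) ^ 2)
        = fun ω => ∑ j, ∑ k, (wo j * wo k) * ((f j ω * f k ω) * (h j ω * h k ω)) := by
      funext ω; exact hsq_exp ω
    rw [this]
    exact integrable_finset_sum _ fun j _ =>
      integrable_finset_sum _ fun k _ => (hterm_int j k).const_mul _
  have hmain : (∫ ω, ((u ω - ξ ω) ⬝ᵥ (Matrix.diagonal (fun k => f k ω) *ᵥ wo)) ^ 2 ∂μ)
      = ∑ j, (wo j * wo j) * (p * (Ru j j + σξ ^ 2)) := by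
    calc (∫ ω, ((u ω - ξ ω) ⬝ᵥ (Matrix.diagonal (fun k => f k ω) *ᵥ wo)) ^ 2 ∂μ)
        = ∫ ω, ∑ j, ∑ k, (wo j * wo k) * ((f j ω * f k ω) * (h j ω * h k ω)) ∂μ := by
          exact integral_congr_ae (Filter.Eventually.of_forall fun ω => hsq_exp ω)
      _ = ∑ j, ∑ k, ∫ ω, (wo j * wo k) * ((f j ω * f k ω) * (h j ω * h k ω)) ∂μ := by
          rw [integral_finset_sum _ fun j _ =>
            integrable_finset_sum _ fun k _ => (hterm_int j k).const_mul _]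
          exact Finset.sum_congr rfl fun j _ =>
            integral_finset_sum _ fun k _ => (hterm_int j k).const_mul _
      _ = ∑ j, ∑ k, (wo j * wo k) * (if j = k then p * (Ru j j + σξ ^ 2) else 0) := by
          exact Finset.sum_congr rfl fun j _ => Finset.sum_congr rfl fun k _ => by
            rw [integral_const_mul, hEterm j k]
      _ = ∑ j, (wo j * wo j) * (p * (Ru j j + σξ ^ 2)) := by
          refine Finset.sum_congr rfl fun j _ => ?_
          rw [Finset.sum_eq_single j (fun k _ hk => by
            rw [if_neg (Ne.symm hk), mul_zero]) (fun hj => absurd (Finset.mem_univ j) hj)]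
          rw [if_pos rfl]
  -- the quadratic form
  have hquad : wo ⬝ᵥ (Ru *ᵥ wo) = ∑ j, Ru j j * (wo j * wo j) := by
    simp only [dotProduct, Matrix.mulVec, dotProduct]
    refine Finset.sum_congr rfl fun j _ => ?_
    rw [Finset.sum_eq_single j (fun k _ hk => by rw [hRudiag (Ne.symm hk), zero_mul])
      (fun hj => absurd (Finset.mem_univ j) hj)]
    ring
  have hfirst : (∫ ω, ((u ω - ξ ω) ⬝ᵥ (Matrix.diagonal (fun k => f k ω) *ᵥ wo)) ^ 2 ∂μ)
      = p * (wo ⬝ᵥ (Ru *ᵥ wo)) + p * σξ ^ 2 * (∑ j, wo j ^ 2) := by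
    rw [hmain, hquad, Finset.mul_sum, Finset.mul_sum, ← Finset.sum_add_distrib]
    exact Finset.sum_congr rfl fun j _ => by ring
  refine ⟨hfirst, ?_⟩
  -- second part
  have hptw : ∀ ω, d ω - censReg M f u ξ ω ⬝ᵥ wo
      = v ω + (u ω - ξ ω) ⬝ᵥ (Matrix.diagonal (fun k => f k ω) *ᵥ wo) := by
    intro ω
    rw [hd ω, hg_eq ω]
    simp only [censReg, add_dotProduct, Matrix.sub_mulVec, Matrix.one_mulVec,
      Matrix.mulVec_diagonal, dotProduct, Pi.sub_apply, Pi.add_apply, hhdef]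
    have hsum : (∑ i, u ω i * wo i)
        - ∑ i, (u ω i - f i ω * u ω i + f i ω * ξ ω i) * wo i
        = ∑ i, f i ω * (u ω i - ξ ω i) * wo i := by
      rw [← Finset.sum_sub_distrib]
      exact Finset.sum_congr rfl fun i _ => by ring
    linarith [hsum]
  -- integrability of v * g
  have hvg_int : Integrable
      (fun ω => v ω * ((u ω - ξ ω) ⬝ᵥ (Matrix.diagonal (fun k => f k ω) *ᵥ wo))) μ := by
    have heq : (fun ω => v ω * ((u ω - ξ ω) ⬝ᵥ (Matrix.diagonal (fun k => f k ω) *ᵥ wo)))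
        = fun ω => ∑ j, (f j ω * wo j) * (v ω * h j ω) := by
      funext ω; rw [hg_eq ω, Finset.mul_sum]
      exact Finset.sum_congr rfl fun j _ => by ring
    rw [heq]
    refine integrable_finset_sum _ fun j _ => ?_
    refine (l2_mul_integrable_s10 hvL2 (hhL2 j)).bdd_mul (c := |wo j|)
      ((hfmeas j).mul_const _).aestronglyMeasurable (Filter.Eventually.of_forall fun ω => ?_)
    rcases hf01 j ω with h0 | h0 <;>
      simp [h0, Real.norm_eq_abs, abs_nonneg]
  -- E[v * g] = 0
  have hvg_zero : ∫ ω, v ω * ((u ω - ξ ω) ⬝ᵥ (Matrix.diagonal (fun k => f k ω) *ᵥ wo)) ∂μ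
      = 0 := by
    have hφ : Measurable (fun q : (Fin M → ℝ) × (Fin M → ℝ) × (Fin M → ℝ) =>
        ∑ j, q.2.1 j * (q.1 j - q.2.2 j) * wo j) :=
      Finset.measurable_sum _ fun j _ => by fun_prop
    have hI : IndepFun v (fun ω => ∑ j, f j ω * h j ω * wo j) μ := by
      have := (hvindep.comp (φ := fun q : (Fin M → ℝ) × (Fin M → ℝ) × (Fin M → ℝ) =>
          ∑ j, q.2.1 j * (q.1 j - q.2.2 j) * wo j) (ψ := id) hφ measurable_id)
      exact this.symm
    have hgm : Measurable (fun ω => ∑ j, f j ω * h j ω * wo j) :=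
      Finset.measurable_sum _ fun j _ => ((hfmeas j).mul (hhmeas j)).mul_const _
    simp_rw [hg_eq]
    rw [hI.integral_fun_mul_eq_mul_integral hvmeas.aestronglyMeasurable hgm.aestronglyMeasurable,
      hvmean, zero_mul]
  -- the second identity
  have hsecond : ∫ ω, (d ω - censReg M f u ξ ω ⬝ᵥ wo) ^ 2 ∂μ
      = σv ^ 2 + ∫ ω, ((u ω - ξ ω) ⬝ᵥ (Matrix.diagonal (fun k => f k ω) *ᵥ wo)) ^ 2 ∂μ := by
    have hptsq : ∀ ω, (d ω - censReg M f u ξ ω ⬝ᵥ wo) ^ 2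
        = v ω ^ 2 + ((u ω - ξ ω) ⬝ᵥ (Matrix.diagonal (fun k => f k ω) *ᵥ wo)) ^ 2
          + 2 * (v ω * ((u ω - ξ ω) ⬝ᵥ (Matrix.diagonal (fun k => f k ω) *ᵥ wo))) := by
      intro ω; rw [hptw ω]; ring
    have hv2 : Integrable (fun ω => v ω ^ 2) μ := hvL2.integrable_sq
    calc ∫ ω, (d ω - censReg M f u ξ ω ⬝ᵥ wo) ^ 2 ∂μ
        = ∫ ω, (v ω ^ 2 + ((u ω - ξ ω) ⬝ᵥ (Matrix.diagonal (fun k => f k ω) *ᵥ wo)) ^ 2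
            + 2 * (v ω * ((u ω - ξ ω) ⬝ᵥ (Matrix.diagonal (fun k => f k ω) *ᵥ wo)))) ∂μ :=
          integral_congr_ae (Filter.Eventually.of_forall hptsq)
      _ = σv ^ 2 + ∫ ω, ((u ω - ξ ω) ⬝ᵥ (Matrix.diagonal (fun k => f k ω) *ᵥ wo)) ^ 2 ∂μ := by
          have hvA : Integrable (fun ω => v ω ^ 2
              + ((u ω - ξ ω) ⬝ᵥ (Matrix.diagonal (fun k => f k ω) *ᵥ wo)) ^ 2) μ := by
            exact hv2.add hgsq_int
          rw [integral_add hvA (hvg_int.const_mul 2),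
            integral_add hv2 hgsq_int, integral_const_mul, hvg_zero, hvvar]
          ring
  rw [hsecond, hfirst]
  ring
end

section
/- Let A ∈ ℝ^{N×N} be a left-stochastic matrix (all entries nonnegative and each column summing to one), let p ∈ [0,1), and for k = 1,…,N let R_k ∈ ℝ^{M×M} be symmetric positive definite and μ_k real with 0 < μ_k < 2/((1−p) λ_max(R_k)), where λ_max denotes the largest eigenvalue. Define the block-diagonal matrices ℳ = diag(μ₁ I_M, …, μ_N I_M) and ℛ = diag(R₁, …, R_N), and set B := (Aᵀ ⊗ I_M)(I_{NM} − (1−p) ℳ ℛ). Then every complex eigenvalue of B has modulus strictly less than 1; consequently, for any initial vector x₀ ∈ ℝ^{NM}, the recursion x_i = B x_{i−1} satisfies x_i → 0 as i → ∞. In particular, the mean error recursion of the modified diffusion algorithm is mean-stable and asymptotically unbiased under this step-size condition. -/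
open Matrix Filter
open scoped Kronecker

private lemma sumSq_mulVec_unitary {n : Type*} [Fintype n] [DecidableEq n]
    (U : Matrix n n ℂ) (hU : Uᴴ * U = 1) (w : n → ℂ) :
    ∑ i, ‖(U *ᵥ w) i‖ ^ 2 = ∑ i, ‖w i‖ ^ 2 := by
  have key : ∀ u : n → ℂ, (∑ i, ‖u i‖ ^ 2 : ℝ) = (star u ⬝ᵥ u).re := by
    intro u
    rw [dotProduct, Complex.re_sum]
    refine Finset.sum_congr rfl fun i _ => ?_
    rw [Pi.star_apply, Complex.sq_norm, Complex.normSq_apply,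
      Complex.mul_re]
    simp
  rw [key, key]
  rw [star_mulVec, dotProduct_mulVec, vecMul_vecMul, hU, vecMul_one]

private lemma map_mul_ofReal {n : Type*} [Fintype n] (P Q : Matrix n n ℝ) :
    (P * Q).map Complex.ofReal = P.map Complex.ofReal * Q.map Complex.ofReal := by
  have h : (Complex.ofReal : ℝ → ℂ) = ⇑Complex.ofRealHom := rfl
  rw [h]
  exact Matrix.map_mul

private lemma key_bound {m : ℕ} (Rm : Matrix (Fin (m+1)) (Fin (m+1)) ℝ) (hR : Rm.PosDef)
    (a c : ℝ) (hc : ∀ j, |1 - a * hR.1.eigenvalues j| ≤ c)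
    (u : Fin (m+1) → ℂ) :
    Real.sqrt (∑ i, ‖((((1 : Matrix (Fin (m+1)) (Fin (m+1)) ℝ) - a • Rm).map Complex.ofReal) *ᵥ u) i‖ ^ 2)
      ≤ c * Real.sqrt (∑ i, ‖u i‖ ^ 2) := by
  have hc0 : 0 ≤ c := le_trans (abs_nonneg _) (hc 0)
  have hH := hR.1
  set U : Matrix (Fin (m+1)) (Fin (m+1)) ℝ := (hH.eigenvectorUnitary : Matrix (Fin (m+1)) (Fin (m+1)) ℝ) with hUdef
  have hU1 : U * star U = 1 := Matrix.mem_unitaryGroup_iff.mp hH.eigenvectorUnitary.2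
  set d : Fin (m+1) → ℝ := fun j => 1 - a * hH.eigenvalues j with hd
  have h1 : a • Rm = U * (a • Matrix.diagonal (RCLike.ofReal ∘ hH.eigenvalues)) * star U := by
    conv_lhs => rw [hH.spectral_theorem]
    simp only [mul_smul_comm, smul_mul_assoc, Unitary.conjStarAlgAut_apply]
    rfl
  have hdecomp : (1 : Matrix (Fin (m+1)) (Fin (m+1)) ℝ) - a • Rm
      = U * Matrix.diagonal d * star U := by
    have h0 : (1 : Matrix (Fin (m+1)) (Fin (m+1)) ℝ) = U * 1 * star U := by
      rw [mul_one, hU1]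
    calc (1 : Matrix (Fin (m+1)) (Fin (m+1)) ℝ) - a • Rm
        = U * 1 * star U - U * (a • Matrix.diagonal (RCLike.ofReal ∘ hH.eigenvalues)) * star U := by
          rw [← h0, ← h1]
      _ = U * ((1 : Matrix (Fin (m+1)) (Fin (m+1)) ℝ)
            - a • Matrix.diagonal (RCLike.ofReal ∘ hH.eigenvalues)) * star U := by
          rw [Matrix.mul_sub, Matrix.sub_mul]
      _ = U * Matrix.diagonal d * star U := by
          congr 1
          congr 1
          rw [← Matrix.diagonal_one, ← Matrix.diagonal_smul, ← Matrix.diagonal_sub]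
          congr 1
  have hstar : Function.Semiconj (Complex.ofReal : ℝ → ℂ) star star := by
    intro r; simp [Complex.conj_ofReal]
  set Uc : Matrix (Fin (m+1)) (Fin (m+1)) ℂ := U.map Complex.ofReal with hUcdef
  have hmapCT : (star U).map Complex.ofReal = Ucᴴ := by
    rw [Matrix.star_eq_conjTranspose, Matrix.conjTranspose_map _ hstar]
  have hUc1 : Uc * Ucᴴ = 1 := by
    rw [← hmapCT, hUcdef, ← map_mul_ofReal, hU1]
    exact Matrix.map_one _ Complex.ofReal_zero Complex.ofReal_one
  have hUc2 : Ucᴴ * Uc = 1 := by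
    have hU2 : star U * U = 1 := Matrix.mem_unitaryGroup_iff'.mp hH.eigenvectorUnitary.2
    rw [← hmapCT, hUcdef, ← map_mul_ofReal, hU2]
    exact Matrix.map_one _ Complex.ofReal_zero Complex.ofReal_one
  have hmap : ((1 : Matrix (Fin (m+1)) (Fin (m+1)) ℝ) - a • Rm).map Complex.ofReal
      = Uc * Matrix.diagonal (fun j => (d j : ℂ)) * Ucᴴ := by
    rw [hdecomp, map_mul_ofReal, map_mul_ofReal, hmapCT]
    congr 1
    congr 1
    exact Matrix.diagonal_map Complex.ofReal_zero
  rw [hmap, ← mulVec_mulVec, ← mulVec_mulVec]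
  set w : Fin (m+1) → ℂ := Ucᴴ *ᵥ u with hw
  rw [sumSq_mulVec_unitary Uc hUc2]
  have hwu : ∑ i, ‖w i‖ ^ 2 = ∑ i, ‖u i‖ ^ 2 := by
    rw [hw]
    exact sumSq_mulVec_unitary Ucᴴ (by rwa [conjTranspose_conjTranspose]) u
  have hdiag : ∑ i, ‖(Matrix.diagonal (fun j => (d j : ℂ)) *ᵥ w) i‖ ^ 2
      ≤ c ^ 2 * ∑ i, ‖w i‖ ^ 2 := by
    rw [Finset.mul_sum]
    refine Finset.sum_le_sum fun i _ => ?_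
    rw [mulVec_diagonal, norm_mul, mul_pow, Complex.norm_real, Real.norm_eq_abs]
    have h2 : |d i| ^ 2 ≤ c ^ 2 := by
      have : |d i| ≤ c := hc i
      exact pow_le_pow_left₀ (abs_nonneg _) this 2
    exact mul_le_mul_of_nonneg_right h2 (by positivity)
  calc Real.sqrt (∑ i, ‖(Matrix.diagonal (fun j => (d j : ℂ)) *ᵥ w) i‖ ^ 2)
      ≤ Real.sqrt (c ^ 2 * ∑ i, ‖w i‖ ^ 2) := Real.sqrt_le_sqrt hdiag
    _ = c * Real.sqrt (∑ i, ‖u i‖ ^ 2) := by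
        rw [hwu, Real.sqrt_mul (by positivity), Real.sqrt_sq hc0]

private lemma Bentry
    (N M : ℕ) (p : ℝ)
    (A : Matrix (Fin (N + 1)) (Fin (N + 1)) ℝ)
    (R : Fin (N + 1) → Matrix (Fin (M + 1)) (Fin (M + 1)) ℝ)
    (μ : Fin (N + 1) → ℝ)
    (MM RR B : Matrix (Fin (N + 1) × Fin (M + 1)) (Fin (N + 1) × Fin (M + 1)) ℝ)
    (hMM : MM = Matrix.diagonal (fun x => μ x.1))
    (hRR : RR = Matrix.of fun x y => if x.1 = y.1 then R x.1 x.2 y.2 else 0)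
    (hB : B = (Aᵀ ⊗ₖ (1 : Matrix (Fin (M + 1)) (Fin (M + 1)) ℝ)) *
        ((1 : Matrix (Fin (N + 1) × Fin (M + 1)) (Fin (N + 1) × Fin (M + 1)) ℝ)
          - (1 - p) • (MM * RR)))
    (k l : Fin (N+1)) (m m' : Fin (M+1)) :
      B (k, m) (l, m') = A l k *
        (((1 : Matrix (Fin (M+1)) (Fin (M+1)) ℝ) - ((1 - p) * μ l) • R l) m m') := by
  subst hB hMM hRR
  simp [Matrix.mul_apply, Matrix.kroneckerMap_apply, Matrix.sub_apply, Matrix.smul_apply,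
    Matrix.one_apply, Matrix.diagonal_mul, Fintype.sum_prod_type, Matrix.transpose_apply,
    ite_mul, mul_ite, Finset.sum_ite_eq, Finset.sum_ite_eq', Prod.ext_iff,
    Finset.sum_sub_distrib, Matrix.diagonal_apply, ite_and]
  ring_nf
  have h : ∀ x : Fin (N+1), ((A x k * if x = l then (if m = m' then (1:ℝ) else 0) else 0) -
        A x k * if x = l then -(p * μ x * R l m m') + μ x * R l m m' else 0)
      = if x = l then A x k * ((if m = m' then (1:ℝ) else 0) - (1-p) * μ l * R l m m') else 0 := by
    intro x
    by_cases hx : x = l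
    · subst hx
      by_cases hm : m = m'
      · simp [hm]; ring
      · simp [hm]
        exact Or.inl (by ring)
    · simp [hx]
  rw [Finset.sum_congr rfl fun x _ => h x, Finset.sum_ite_eq' Finset.univ l]
  simp
  split_ifs <;> ring

set_option maxHeartbeats 2000000 in
/-- mean stability of the modified diffusion recursion. If `A` is
left-stochastic, each `R_k` is symmetric positive definite, and
`0 < μ_k < 2/((1−p) λ_max(R_k))`, then every eigenvalue of
`B = (Aᵀ ⊗ I_M)(I − (1−p) ℳ ℛ)` has modulus strictly less than one, and the recursion
`x_i = B x_{i−1}` converges to zero from any initial condition. -/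
theorem diffusion_mean_stability
    (N M : ℕ) (p : ℝ) (hp0 : 0 ≤ p) (hp1 : p < 1)
    (A : Matrix (Fin (N + 1)) (Fin (N + 1)) ℝ)
    (hAnonneg : ∀ l k, 0 ≤ A l k)
    (hAcol : ∀ k, ∑ l, A l k = 1)
    (R : Fin (N + 1) → Matrix (Fin (M + 1)) (Fin (M + 1)) ℝ)
    (hRpd : ∀ k, (R k).PosDef)
    (μ : Fin (N + 1) → ℝ)
    (hμ : ∀ k, 0 < μ k ∧
        μ k < 2 / ((1 - p) *
          (Finset.univ.sup' Finset.univ_nonempty ((hRpd k).1.eigenvalues))))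
    (MM RR B : Matrix (Fin (N + 1) × Fin (M + 1)) (Fin (N + 1) × Fin (M + 1)) ℝ)
    (hMM : MM = Matrix.diagonal (fun x => μ x.1))
    (hRR : RR = Matrix.of fun x y => if x.1 = y.1 then R x.1 x.2 y.2 else 0)
    (hB : B = (Aᵀ ⊗ₖ (1 : Matrix (Fin (M + 1)) (Fin (M + 1)) ℝ)) *
        ((1 : Matrix (Fin (N + 1) × Fin (M + 1)) (Fin (N + 1) × Fin (M + 1)) ℝ)
          - (1 - p) • (MM * RR))) :
    (∀ z ∈ spectrum ℂ (B.map Complex.ofReal), ‖z‖ < 1)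
    ∧ (∀ x : ℕ → (Fin (N + 1) × Fin (M + 1)) → ℝ,
        (∀ i : ℕ, x (i + 1) = B *ᵥ x i) → Tendsto x atTop (nhds 0)) := by
  have hBent := Bentry N M p A R μ MM RR B hMM hRR hB
  -- the complexified mulVec formula
  have hBmv : ∀ (v : (Fin (N + 1) × Fin (M + 1)) → ℂ) (k : Fin (N+1)) (m : Fin (M+1)),
      ((B.map Complex.ofReal) *ᵥ v) (k, m)
        = ∑ l, (A l k : ℂ) *
            ((((1 : Matrix (Fin (M+1)) (Fin (M+1)) ℝ) - ((1 - p) * μ l) • R l).map Complex.ofReal)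
              *ᵥ (fun m' => v (l, m'))) m := by
    intro v k m
    simp only [Matrix.mulVec, dotProduct, Matrix.map_apply]
    rw [Fintype.sum_prod_type]
    refine Finset.sum_congr rfl fun l _ => ?_
    rw [Finset.mul_sum]
    refine Finset.sum_congr rfl fun m' _ => ?_
    rw [hBent k l m m']
    push_cast
    ring
  -- the contraction constant
  set c : ℝ := Finset.univ.sup' Finset.univ_nonempty
    (fun l : Fin (N+1) => Finset.univ.sup' Finset.univ_nonempty
      (fun j : Fin (M+1) => |1 - (1 - p) * μ l * (hRpd l).1.eigenvalues j|)) with hcdef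
  have hcle : ∀ l j, |1 - (1 - p) * μ l * (hRpd l).1.eigenvalues j| ≤ c := fun l j =>
    le_trans
      (Finset.le_sup' (fun j : Fin (M+1) => |1 - (1 - p) * μ l * (hRpd l).1.eigenvalues j|)
        (Finset.mem_univ j))
      (Finset.le_sup'
        (fun l : Fin (N+1) => Finset.univ.sup' Finset.univ_nonempty
          (fun j : Fin (M+1) => |1 - (1 - p) * μ l * (hRpd l).1.eigenvalues j|))
        (Finset.mem_univ l))
  have hc0 : 0 ≤ c := le_trans (abs_nonneg _) (hcle 0 0)
  have h1p : 0 < 1 - p := by linarith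
  have hc1 : c < 1 := by
    rw [hcdef, Finset.sup'_lt_iff]
    intro l _
    rw [Finset.sup'_lt_iff]
    intro j _
    have hlampos : 0 < (hRpd l).1.eigenvalues j := (hRpd l).eigenvalues_pos j
    have hμpos := (hμ l).1
    have hLampos : 0 < Finset.univ.sup' Finset.univ_nonempty ((hRpd l).1.eigenvalues) :=
      lt_of_lt_of_le hlampos (Finset.le_sup' _ (Finset.mem_univ j))
    have h2 : (1 - p) * μ l * (hRpd l).1.eigenvalues j < 2 := by
      have hd := (hμ l).2
      rw [lt_div_iff₀ (by positivity)] at hd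
      calc (1 - p) * μ l * (hRpd l).1.eigenvalues j
          ≤ (1 - p) * μ l * Finset.univ.sup' Finset.univ_nonempty ((hRpd l).1.eigenvalues) := by
            exact mul_le_mul_of_nonneg_left (Finset.le_sup' _ (Finset.mem_univ j)) (by positivity)
        _ = μ l * ((1 - p) * Finset.univ.sup' Finset.univ_nonempty ((hRpd l).1.eigenvalues)) := by
            ring
        _ < 2 := hd
    have h3 : 0 < (1 - p) * μ l * (hRpd l).1.eigenvalues j := by positivity
    rw [abs_lt]
    constructor <;> linarith
  -- block norms
  set bq : ((Fin (N+1) × Fin (M+1)) → ℂ) → Fin (N+1) → ℝ :=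
    fun v k => Real.sqrt (∑ m', ‖v (k, m')‖ ^ 2) with hbq
  set bn : ((Fin (N+1) × Fin (M+1)) → ℂ) → ℝ :=
    fun v => Finset.univ.sup' Finset.univ_nonempty (bq v) with hbn
  have hbq0 : ∀ v k, 0 ≤ bq v k := fun v k => Real.sqrt_nonneg _
  have hbqbn : ∀ v k, bq v k ≤ bn v := fun v k => Finset.le_sup' _ (Finset.mem_univ k)
  have hbn0 : ∀ v, 0 ≤ bn v := fun v => le_trans (hbq0 v 0) (hbqbn v 0)
  have hentry : ∀ (v : (Fin (N+1) × Fin (M+1)) → ℂ) k m, ‖v (k, m)‖ ≤ bq v k := by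
    intro v k m
    rw [show ‖v (k,m)‖ = Real.sqrt (‖v (k,m)‖^2) from (Real.sqrt_sq (norm_nonneg _)).symm]
    apply Real.sqrt_le_sqrt
    exact Finset.single_le_sum (f := fun m' => ‖v (k,m')‖^2) (fun i _ => by positivity)
      (Finset.mem_univ m)
  -- the contraction estimate
  have hcontr : ∀ v, bn ((B.map Complex.ofReal) *ᵥ v) ≤ c * bn v := by
    intro v
    apply Finset.sup'_le
    intro k _
    have enorm : ∀ w : Fin (M+1) → ℂ,
        ‖(WithLp.linearEquiv 2 ℂ (Fin (M+1) → ℂ)).symm w‖ = Real.sqrt (∑ i, ‖w i‖ ^ 2) := by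
      intro w
      rw [EuclideanSpace.norm_eq]
      exact congrArg Real.sqrt (Finset.sum_congr rfl fun i _ => rfl)
    set Sc : Fin (N+1) → Matrix (Fin (M+1)) (Fin (M+1)) ℂ :=
      fun l => ((1 : Matrix (Fin (M+1)) (Fin (M+1)) ℝ) - ((1 - p) * μ l) • R l).map Complex.ofReal
      with hSc
    set w : Fin (N+1) → (Fin (M+1) → ℂ) :=
      fun l => (A l k : ℂ) • (Sc l *ᵥ fun m' => v (l, m')) with hwdef
    have hfun : (fun m => ((B.map Complex.ofReal) *ᵥ v) (k, m)) = ∑ l, w l := by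
      funext m
      rw [Finset.sum_apply, hBmv v k m]
      exact Finset.sum_congr rfl fun l _ => by simp [hwdef, hSc, smul_eq_mul]
    have h1 : bq ((B.map Complex.ofReal) *ᵥ v) k
        = ‖(WithLp.linearEquiv 2 ℂ (Fin (M+1) → ℂ)).symm (∑ l, w l)‖ := by
      rw [enorm, ← hfun]
    rw [h1, map_sum]
    calc ‖∑ l, (WithLp.linearEquiv 2 ℂ (Fin (M+1) → ℂ)).symm (w l)‖
        ≤ ∑ l, ‖(WithLp.linearEquiv 2 ℂ (Fin (M+1) → ℂ)).symm (w l)‖ := norm_sum_le _ _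
      _ ≤ ∑ l, A l k * (c * bn v) := by
          refine Finset.sum_le_sum fun l _ => ?_
          rw [hwdef]
          simp only [_root_.map_smul, norm_smul]
          have hA : ‖(A l k : ℂ)‖ = A l k := by
            rw [Complex.norm_real, Real.norm_eq_abs, abs_of_nonneg (hAnonneg l k)]
          rw [hA]
          refine mul_le_mul_of_nonneg_left ?_ (hAnonneg l k)
          rw [enorm]
          calc Real.sqrt (∑ i, ‖(Sc l *ᵥ fun m' => v (l, m')) i‖ ^ 2)
              ≤ c * Real.sqrt (∑ i, ‖v (l, i)‖ ^ 2) :=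
                key_bound (R l) (hRpd l) ((1 - p) * μ l) c (fun j => hcle l j) _
            _ ≤ c * bn v := mul_le_mul_of_nonneg_left (hbqbn v l) hc0
      _ = c * bn v := by rw [← Finset.sum_mul, hAcol k, one_mul]
  constructor
  · -- eigenvalue bound
    intro z hz
    rw [← AlgEquiv.spectrum_eq
      (Matrix.toLinAlgEquiv' (R := ℂ) (n := Fin (N+1) × Fin (M+1))) (B.map Complex.ofReal)] at hz
    have hev := Module.End.hasEigenvalue_iff_mem_spectrum.mpr hz
    obtain ⟨v, hv⟩ := hev.exists_hasEigenvector
    have hv1 : (B.map Complex.ofReal) *ᵥ v = z • v := by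
      have h := hv.apply_eq_smul
      rwa [Matrix.toLinAlgEquiv'_apply] at h
    have hvne := hv.2
    obtain ⟨km, hkm⟩ := Function.ne_iff.mp hvne
    have hbnpos : 0 < bn v := by
      have h0 : 0 < ‖v km‖ := norm_pos_iff.mpr (by simpa using hkm)
      calc (0:ℝ) < ‖v km‖ := h0
        _ ≤ bq v km.1 := by
          have := hentry v km.1 km.2
          simpa using this
        _ ≤ bn v := hbqbn v km.1
    have hbqz : ∀ k, bq (z • v) k = ‖z‖ * bq v k := by
      intro k
      simp only [hbq, Pi.smul_apply, smul_eq_mul, norm_mul, mul_pow]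
      rw [← Finset.mul_sum, Real.sqrt_mul (by positivity), Real.sqrt_sq (norm_nonneg z)]
    have hsmul : bn (z • v) = ‖z‖ * bn v := by
      apply le_antisymm
      · apply Finset.sup'_le
        intro k _
        rw [hbqz k]
        exact mul_le_mul_of_nonneg_left (hbqbn v k) (norm_nonneg z)
      · obtain ⟨k0, _, hk0⟩ := Finset.exists_mem_eq_sup' Finset.univ_nonempty (bq v)
        have hk0' : bn v = bq v k0 := hk0
        rw [hk0']
        calc ‖z‖ * bq v k0 = bq (z • v) k0 := (hbqz k0).symm
          _ ≤ bn (z • v) := hbqbn (z • v) k0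
    have hle : ‖z‖ * bn v ≤ c * bn v := by
      rw [← hsmul, ← hv1]
      exact hcontr v
    have hzc : ‖z‖ ≤ c := le_of_mul_le_mul_right hle hbnpos
    calc ‖z‖ = ‖z‖ := rfl
      _ ≤ c := hzc
      _ < 1 := hc1
  · -- convergence of the recursion
    intro x hx
    set y : ℕ → (Fin (N + 1) × Fin (M + 1)) → ℂ := fun i km => ((x i km : ℝ) : ℂ) with hy
    have hbound : ∀ i, bn (y i) ≤ c ^ i * bn (y 0) := by
      intro i
      induction i with
      | zero => simp
      | succ n ih =>
        have hstep : y (n + 1) = (B.map Complex.ofReal) *ᵥ (y n) := by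
          funext km
          rw [hy]
          simp only [Matrix.mulVec, dotProduct, Matrix.map_apply, hx n]
          push_cast
          rfl
        rw [hstep]
        calc bn ((B.map Complex.ofReal) *ᵥ (y n))
            ≤ c * bn (y n) := hcontr _
          _ ≤ c * (c ^ n * bn (y 0)) := mul_le_mul_of_nonneg_left ih hc0
          _ = c ^ (n + 1) * bn (y 0) := by ring
    rw [tendsto_pi_nhds]
    intro km
    have hb : ∀ i, ‖x i km‖ ≤ c ^ i * bn (y 0) := by
      intro i
      have h1 : ‖x i km‖ = ‖y i km‖ := by rw [hy, Complex.norm_real]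
      rw [h1]
      calc ‖y i km‖ ≤ bq (y i) km.1 := by
            have := hentry (y i) km.1 km.2
            simpa using this
        _ ≤ bn (y i) := hbqbn _ _
        _ ≤ c ^ i * bn (y 0) := hbound i
    have hlim : Tendsto (fun i => c ^ i * bn (y 0)) atTop (nhds 0) := by
      simpa using (tendsto_pow_atTop_nhds_zero_of_lt_one hc0 hc1).mul_const (bn (y 0))
    simpa using squeeze_zero_norm hb hlim
end
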